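/- arXiv:1502.01533 — 7 statements merged into one kernel-verified Lean document; each statement's English description precedes it below -/
import Mathlib

section
/- The B-splines of order p are linearly independent: if c : ℤ → ℝ is a finitely supported family of coefficients such that Σ_{k∈ℤ} c_k φ_k^[p](t) = 0 for all t ∈ ℝ, then c_k = 0 for every k ∈ ℤ. -/
/-- B-splines of order `p` on the strictly increasing knot sequence `x : ℤ → ℝ`,
defined by the recursion of Definition 2 of the paper.  `Bspline x p k` is the
B-spline of order `p` (degree `p-1`) associated with the knot `x k`. -/
noncomputable def Bspline (x : ℤ → ℝ) : ℕ → ℤ → ℝ → ℝ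
  | 0, _, _ => 0
  | 1, k, t => if x k ≤ t ∧ t < x (k + 1) then 1 else 0
  | p + 2, k, t =>
      ((t - x (k - ((p + 2) / 2 : ℕ))) /
          (x (k + ((p + 3) / 2 : ℕ) - 1) - x (k - ((p + 2) / 2 : ℕ)))) *
        Bspline x (p + 1) (k - 1 + ((p + 2) % 2 : ℕ)) t +
      ((x (k + ((p + 3) / 2 : ℕ)) - t) /
          (x (k + ((p + 3) / 2 : ℕ)) - x (k - ((p + 2) / 2 : ℕ) + 1))) *
        Bspline x (p + 1) (k + ((p + 2) % 2 : ℕ)) t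

lemma bspline_eq_zero_left (x : ℤ → ℝ) (hx : Monotone x) :
    ∀ p (k : ℤ) (t : ℝ), t < x (k - (p / 2 : ℕ)) → Bspline x p k t = 0 := by
  intro p
  induction p using Nat.strong_induction_on with
  | _ p ih =>
    match p with
    | 0 => intro k t ht; rfl
    | 1 =>
      intro k t ht
      simp only [Nat.reduceDiv, Nat.cast_zero, sub_zero] at ht
      simp [Bspline, not_le.mpr ht]
    | p + 2 =>
      intro k t ht
      have h1 : Bspline x (p + 1) (k - 1 + ((p + 2) % 2 : ℕ)) t = 0 := by
        apply ih (p+1) (by omega)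
        rwa [show (k - 1 + ((p + 2) % 2 : ℕ)) - ((p+1)/2 : ℕ) = k - ((p+2)/2 : ℕ) by omega]
      have h2 : Bspline x (p + 1) (k + ((p + 2) % 2 : ℕ)) t = 0 := by
        apply ih (p+1) (by omega)
        rw [show (k + ((p + 2) % 2 : ℕ)) - ((p+1)/2 : ℕ) = k - ((p+2)/2 : ℕ) + 1 by omega]
        exact lt_of_lt_of_le ht (hx (by omega))
      simp only [Bspline]
      rw [h1, h2]
      ring

lemma bspline_eq_zero_right (x : ℤ → ℝ) (hx : Monotone x) :
    ∀ p (k : ℤ) (t : ℝ), x (k + ((p + 1) / 2 : ℕ)) ≤ t → Bspline x p k t = 0 := by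
  intro p
  induction p using Nat.strong_induction_on with
  | _ p ih =>
    match p with
    | 0 => intro k t ht; rfl
    | 1 =>
      intro k t ht
      norm_num at ht
      simp [Bspline, not_lt.mpr ht]
    | p + 2 =>
      intro k t ht
      have h1 : Bspline x (p + 1) (k - 1 + ((p + 2) % 2 : ℕ)) t = 0 := by
        apply ih (p+1) (by omega)
        rw [show (k - 1 + ((p + 2) % 2 : ℕ)) + ((p+2)/2 : ℕ) = k + ((p+3)/2 : ℕ) - 1 by omega]
        exact le_trans (hx (by omega)) ht
      have h2 : Bspline x (p + 1) (k + ((p + 2) % 2 : ℕ)) t = 0 := by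
        apply ih (p+1) (by omega)
        rwa [show (k + ((p + 2) % 2 : ℕ)) + ((p+2)/2 : ℕ) = k + ((p+3)/2 : ℕ) by omega]
      simp only [Bspline]
      rw [h1, h2]
      ring

lemma bspline_nonneg (x : ℤ → ℝ) (hx : StrictMono x) :
    ∀ p (k : ℤ) (t : ℝ), 0 ≤ Bspline x p k t := by
  intro p
  induction p using Nat.strong_induction_on with
  | _ p ih =>
    match p with
    | 0 => intro k t; exact le_refl 0
    | 1 => intro k t; simp only [Bspline]; positivity
    | p + 2 =>
      intro k t
      simp only [Bspline]
      have ha : (0:ℝ) ≤ ((t - x (k - ((p + 2) / 2 : ℕ))) /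
          (x (k + ((p + 3) / 2 : ℕ) - 1) - x (k - ((p + 2) / 2 : ℕ)))) *
        Bspline x (p + 1) (k - 1 + ((p + 2) % 2 : ℕ)) t := by
        rcases lt_or_ge t (x (k - ((p + 2) / 2 : ℕ))) with h | h
        · rw [bspline_eq_zero_left x hx.monotone (p+1) _ t
            (by rwa [show (k - 1 + ((p + 2) % 2 : ℕ)) - ((p+1)/2 : ℕ) = k - ((p+2)/2 : ℕ) by omega]),
            mul_zero]
        · apply mul_nonneg (div_nonneg (by linarith) (sub_nonneg.mpr (hx.monotone (by omega))))
          exact ih (p+1) (by omega) _ _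
      have hb : (0:ℝ) ≤ ((x (k + ((p + 3) / 2 : ℕ)) - t) /
          (x (k + ((p + 3) / 2 : ℕ)) - x (k - ((p + 2) / 2 : ℕ) + 1))) *
        Bspline x (p + 1) (k + ((p + 2) % 2 : ℕ)) t := by
        rcases le_or_gt (x (k + ((p + 3) / 2 : ℕ))) t with h | h
        · rw [bspline_eq_zero_right x hx.monotone (p+1) _ t
            (by rwa [show (k + ((p + 2) % 2 : ℕ)) + ((p+2)/2 : ℕ) = k + ((p+3)/2 : ℕ) by omega]),
            mul_zero]
        · apply mul_nonneg (div_nonneg (by linarith) (sub_nonneg.mpr (hx.monotone (by omega))))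
          exact ih (p+1) (by omega) _ _
      linarith

lemma bspline_pos (x : ℤ → ℝ) (hx : StrictMono x) :
    ∀ p, 1 ≤ p → ∀ (k : ℤ) (t : ℝ), x (k - (p / 2 : ℕ)) < t → t < x (k + ((p + 1) / 2 : ℕ)) →
      0 < Bspline x p k t := by
  intro p
  induction p using Nat.strong_induction_on with
  | _ p ih =>
    match p with
    | 0 => intro h; omega
    | 1 =>
      intro _ k t h1 h2
      norm_num at h1 h2
      simp [Bspline, h1.le, h2]
    | p + 2 =>
      intro _ k t h1 h2
      simp only [Bspline]
      have hd1 : (0:ℝ) < x (k + ((p + 3) / 2 : ℕ) - 1) - x (k - ((p + 2) / 2 : ℕ)) :=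
        sub_pos.mpr (hx (by omega))
      have hd2 : (0:ℝ) < x (k + ((p + 3) / 2 : ℕ)) - x (k - ((p + 2) / 2 : ℕ) + 1) :=
        sub_pos.mpr (hx (by omega))
      rcases lt_or_ge t (x (k + ((p + 3) / 2 : ℕ) - 1)) with h | h
      · -- first term positive, second nonneg
        have hpos : 0 < Bspline x (p + 1) (k - 1 + ((p + 2) % 2 : ℕ)) t := by
          match p with
          | 0 =>
            -- order 1 child: indicator
            have e1 : (k - 1 + ((0 + 2) % 2 : ℕ) : ℤ) = k - 1 := by omega
            simp only [e1, Bspline]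
            rw [if_pos ⟨le_of_lt (by rwa [show k - 1 = k - ((0+2)/2 : ℕ) by omega]),
              by rwa [show (k - 1 + 1 : ℤ) = k + ((0+3)/2 : ℕ) - 1 by omega]⟩]
            norm_num
          | p + 1 =>
            apply ih (p+2) (by omega) (by omega)
            · rwa [show (k - 1 + ((p + 3) % 2 : ℕ)) - ((p+2)/2 : ℕ) = k - ((p+3)/2 : ℕ) by omega]
            · rwa [show (k - 1 + ((p + 3) % 2 : ℕ)) + ((p+3)/2 : ℕ) = k + ((p+4)/2 : ℕ) - 1 by omega]
        have hc1 : (0:ℝ) < (t - x (k - ((p + 2) / 2 : ℕ))) /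
            (x (k + ((p + 3) / 2 : ℕ) - 1) - x (k - ((p + 2) / 2 : ℕ))) :=
          div_pos (by linarith) hd1
        have hsecond : (0:ℝ) ≤ ((x (k + ((p + 3) / 2 : ℕ)) - t) /
            (x (k + ((p + 3) / 2 : ℕ)) - x (k - ((p + 2) / 2 : ℕ) + 1))) *
          Bspline x (p + 1) (k + ((p + 2) % 2 : ℕ)) t := by
          apply mul_nonneg (div_nonneg (by linarith) hd2.le) (bspline_nonneg x hx _ _ _)
        nlinarith [mul_pos hc1 hpos]
      · -- second term positive, first nonneg
        have hpos : 0 < Bspline x (p + 1) (k + ((p + 2) % 2 : ℕ)) t := by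
          match p with
          | 0 =>
            have e1 : (k + ((0 + 2) % 2 : ℕ) : ℤ) = k := by omega
            simp only [e1, Bspline]
            rw [if_pos ⟨le_trans (le_of_eq (by congr 1; omega)) h,
              by rwa [show (k + 1 : ℤ) = k + ((0+3)/2 : ℕ) by omega]⟩]
            norm_num
          | p + 1 =>
            apply ih (p+2) (by omega) (by omega)
            · rw [show (k + ((p + 3) % 2 : ℕ)) - ((p+2)/2 : ℕ) = k - ((p+3)/2 : ℕ) + 1 by omega]
              exact lt_of_lt_of_le (hx (by omega)) h
            · rwa [show (k + ((p + 3) % 2 : ℕ)) + ((p+3)/2 : ℕ) = k + ((p+4)/2 : ℕ) by omega]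
        have hc2 : (0:ℝ) < (x (k + ((p + 3) / 2 : ℕ)) - t) /
            (x (k + ((p + 3) / 2 : ℕ)) - x (k - ((p + 2) / 2 : ℕ) + 1)) :=
          div_pos (by linarith) hd2
        have hfirst : (0:ℝ) ≤ ((t - x (k - ((p + 2) / 2 : ℕ))) /
            (x (k + ((p + 3) / 2 : ℕ) - 1) - x (k - ((p + 2) / 2 : ℕ)))) *
          Bspline x (p + 1) (k - 1 + ((p + 2) % 2 : ℕ)) t := by
          apply mul_nonneg (div_nonneg (by linarith) hd1.le) (bspline_nonneg x hx _ _ _)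
        nlinarith [mul_pos hc2 hpos]

/-- the B-splines of order `p` are linearly independent: any
finitely supported family of coefficients `c` whose B-spline combination
vanishes identically must be zero. -/
theorem bspline_linearIndependent
    (x : ℤ → ℝ) (hx : StrictMono x) (p : ℕ) (hp : 1 ≤ p)
    (c : ℤ → ℝ) (hc : (Function.support c).Finite)
    (h : ∀ t : ℝ, ∑ᶠ k : ℤ, c k * Bspline x p k t = 0) :
    ∀ k : ℤ, c k = 0 := by
  by_contra hcon
  push_neg at hcon
  obtain ⟨j, hj⟩ := hcon
  have hne : hc.toFinset.Nonempty := ⟨j, by simpa using hj⟩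
  set k0 := hc.toFinset.min' hne with hk0def
  have hk0 : c k0 ≠ 0 := by simpa using hc.toFinset.min'_mem hne
  set t : ℝ := (x (k0 - (p / 2 : ℕ)) + x (k0 - (p / 2 : ℕ) + 1)) / 2 with htdef
  have hlt : x (k0 - (p / 2 : ℕ)) < x (k0 - (p / 2 : ℕ) + 1) := hx (by omega)
  have ht1 : x (k0 - (p / 2 : ℕ)) < t := by rw [htdef]; linarith
  have ht2 : t < x (k0 - (p / 2 : ℕ) + 1) := by rw [htdef]; linarith
  have hBpos : 0 < Bspline x p k0 t :=
    bspline_pos x hx p hp k0 t ht1 (lt_of_lt_of_le ht2 (hx.monotone (by omega)))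
  have hsum : ∑ᶠ k : ℤ, c k * Bspline x p k t = c k0 * Bspline x p k0 t := by
    rw [finsum_eq_finset_sum_of_support_subset _ (s := hc.toFinset) ?_]
    · apply Finset.sum_eq_single_of_mem k0 (by simpa using hk0)
      intro k hk hkne
      have hge : k0 ≤ k := hc.toFinset.min'_le k hk
      have hB0 : Bspline x p k t = 0 := by
        apply bspline_eq_zero_left x hx.monotone
        refine lt_of_lt_of_le ht2 (hx.monotone ?_)
        have : k0 + 1 ≤ k := lt_of_le_of_ne hge (Ne.symm hkne)
        omega
      rw [hB0, mul_zero]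
    · intro k hk
      simp only [Function.mem_support] at hk
      simp only [Set.Finite.coe_toFinset, Function.mem_support]
      exact fun h0 => hk (by rw [h0, zero_mul])
  rw [h t] at hsum
  exact hk0 (by
    rcases mul_eq_zero.mp hsum.symm with h' | h'
    · exact h'
    · exact absurd h' hBpos.ne')
end

section
/- Let p ≥ 2. On every open interval (x_m, x_{m+1}) between consecutive knots, the B-spline φ_k^[p] is differentiable and its derivative satisfies (d/dt) φ_k^[p](t) = (p−1)·[ φ_{k−1+r}^[p−1](t) / (x_{k+⌈p/2⌉−1} − x_{k−⌊p/2⌋}) − φ_{k+r}^[p−1](t) / (x_{k+⌈p/2⌉} − x_{k−⌊p/2⌋+1}) ], where r = p − 2⌊p/2⌋. -/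
/-- Auxiliary: B-splines with the standard indexing convention
(`Nsp x n i` is the B-spline of order `n` supported on `[x i, x (i+n)]`). -/
noncomputable def Nsp (x : ℤ → ℝ) : ℕ → ℤ → ℝ → ℝ
  | 0, _, _ => 0
  | 1, i, t => if x i ≤ t ∧ t < x (i + 1) then 1 else 0
  | n + 2, i, t =>
      (t - x i) / (x (i + (n : ℤ) + 1) - x i) * Nsp x (n + 1) i t +
      (x (i + (n : ℤ) + 2) - t) / (x (i + (n : ℤ) + 2) - x (i + 1)) * Nsp x (n + 1) (i + 1) t

lemma Nsp_one_const (x : ℤ → ℝ) (hx : StrictMono x) (j m : ℤ) {t s : ℝ}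
    (ht : t ∈ Set.Ioo (x m) (x (m + 1))) (hs : s ∈ Set.Ioo (x m) (x (m + 1))) :
    Nsp x 1 j s = Nsp x 1 j t := by
  have key : ∀ u : ℝ, u ∈ Set.Ioo (x m) (x (m + 1)) → ((x j ≤ u ∧ u < x (j + 1)) ↔ j = m) := by
    intro u hu
    constructor
    · rintro ⟨h1, h2⟩
      have hjm : j < m + 1 := hx.lt_iff_lt.mp (lt_of_le_of_lt h1 hu.2)
      have hmj : m < j + 1 := hx.lt_iff_lt.mp (lt_trans hu.1 h2)
      omega
    · rintro rfl
      exact ⟨le_of_lt hu.1, hu.2⟩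
  show (if x j ≤ s ∧ s < x (j+1) then (1:ℝ) else 0) = (if x j ≤ t ∧ t < x (j+1) then 1 else 0)
  simp only [key s hs, key t ht]

lemma xsub_ne (x : ℤ → ℝ) (hx : StrictMono x) {a b : ℤ} (h : a < b) : x b - x a ≠ 0 :=
  sub_ne_zero.mpr (ne_of_gt (hx h))

lemma Nsp_hasDerivAt (x : ℤ → ℝ) (hx : StrictMono x) :
    ∀ (n : ℕ) (i m : ℤ) (t : ℝ), t ∈ Set.Ioo (x m) (x (m + 1)) →
    HasDerivAt (Nsp x (n + 2) i)
      (((n : ℝ) + 1) * (Nsp x (n + 1) i t / (x (i + (n : ℤ) + 1) - x i)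
        - Nsp x (n + 1) (i + 1) t / (x (i + (n : ℤ) + 2) - x (i + 1)))) t := by
  intro n
  induction n with
  | zero =>
    intro i m t ht
    simp only [Nat.cast_zero, add_zero, Nat.zero_add, zero_add]
    have hf : HasDerivAt (fun s : ℝ =>
        (s - x i) / (x (i + 1) - x i) * Nsp x 1 i t +
        (x (i + 2) - s) / (x (i + 2) - x (i + 1)) * Nsp x 1 (i + 1) t)
        (1 / (x (i + 1) - x i) * Nsp x 1 i t +
         -1 / (x (i + 2) - x (i + 1)) * Nsp x 1 (i + 1) t) t := by
      have h1 := (((hasDerivAt_id t).sub_const (x i)).div_const (x (i + 1) - x i)).mul_const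
        (Nsp x 1 i t)
      have h2 := ((HasDerivAt.const_sub (x (i + 2)) (hasDerivAt_id t)).div_const
        (x (i + 2) - x (i + 1))).mul_const (Nsp x 1 (i + 1) t)
      have := h1.add h2
      exact this
    have heq : Nsp x 2 i =ᶠ[nhds t] (fun s : ℝ =>
        (s - x i) / (x (i + 1) - x i) * Nsp x 1 i t +
        (x (i + 2) - s) / (x (i + 2) - x (i + 1)) * Nsp x 1 (i + 1) t) := by
      filter_upwards [isOpen_Ioo.mem_nhds ht] with s hs
      show Nsp x (0 + 2) i s = _
      conv_lhs => rw [Nsp]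
      simp only [Nat.cast_zero, add_zero, Nat.zero_add, zero_add]
      rw [Nsp_one_const x hx i m ht hs, Nsp_one_const x hx (i + 1) m ht hs]
    exact (hf.congr_of_eventuallyEq heq).congr_deriv (by ring)
  | succ q ih =>
    intro i m t ht
    have hA := ih i m t ht
    have hB := ih (i + 1) m t ht
    rw [show i + 1 + (q : ℤ) + 1 = i + (q : ℤ) + 2 from by ring,
      show i + 1 + (q : ℤ) + 2 = i + (q : ℤ) + 3 from by ring,
      show i + 1 + 1 = i + 2 from by ring] at hB
    -- normalize the goal
    rw [show ((q + 1 : ℕ) : ℤ) = (q : ℤ) + 1 from by push_cast; ring,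
      show ((q + 1 : ℕ) : ℝ) = (q : ℝ) + 1 from by push_cast; ring,
      show i + ((q : ℤ) + 1) + 1 = i + (q : ℤ) + 2 from by ring,
      show i + ((q : ℤ) + 1) + 2 = i + (q : ℤ) + 3 from by ring,
      show q + 1 + 2 = q + 3 from rfl, show q + 1 + 1 = q + 2 from rfl]
    -- nonzero denominators
    have hD1 : x (i + (q : ℤ) + 2) - x i ≠ 0 := xsub_ne x hx (by omega)
    have hD2 : x (i + (q : ℤ) + 3) - x (i + 1) ≠ 0 := xsub_ne x hx (by omega)
    have he1 : x (i + (q : ℤ) + 1) - x i ≠ 0 := xsub_ne x hx (by omega)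
    have he2 : x (i + (q : ℤ) + 2) - x (i + 1) ≠ 0 := xsub_ne x hx (by omega)
    have he3 : x (i + (q : ℤ) + 3) - x (i + 2) ≠ 0 := xsub_ne x hx (by omega)
    have h1 := ((hasDerivAt_id t).sub_const (x i)).div_const (x (i + (q : ℤ) + 2) - x i)
    have h2 := (HasDerivAt.const_sub (x (i + (q : ℤ) + 3)) (hasDerivAt_id t)).div_const
      (x (i + (q : ℤ) + 3) - x (i + 1))
    have hsum := (h1.mul hA).add (h2.mul hB)
    simp only [id_eq] at hsum
    have hfun : (fun s : ℝ =>
        (s - x i) / (x (i + (q : ℤ) + 2) - x i) * Nsp x (q + 2) i s +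
        (x (i + (q : ℤ) + 3) - s) / (x (i + (q : ℤ) + 3) - x (i + 1)) * Nsp x (q + 2) (i + 1) s)
        = Nsp x (q + 3) i := by
      funext s
      show _ = Nsp x (q + 1 + 2) i s
      conv_rhs => rw [Nsp]
      rw [show ((q + 1 : ℕ) : ℤ) = (q : ℤ) + 1 from by push_cast; ring,
        show i + ((q : ℤ) + 1) + 1 = i + (q : ℤ) + 2 from by ring,
        show i + ((q : ℤ) + 1) + 2 = i + (q : ℤ) + 3 from by ring]
    rw [← hfun]
    have expand1 : Nsp x (q + 2) i t =
        (t - x i) / (x (i + (q : ℤ) + 1) - x i) * Nsp x (q + 1) i t +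
        (x (i + (q : ℤ) + 2) - t) / (x (i + (q : ℤ) + 2) - x (i + 1)) * Nsp x (q + 1) (i + 1) t := by
      conv_lhs => rw [Nsp]
    have expand2 : Nsp x (q + 2) (i + 1) t =
        (t - x (i + 1)) / (x (i + (q : ℤ) + 2) - x (i + 1)) * Nsp x (q + 1) (i + 1) t +
        (x (i + (q : ℤ) + 3) - t) / (x (i + (q : ℤ) + 3) - x (i + 2)) * Nsp x (q + 1) (i + 2) t := by
      conv_lhs => rw [Nsp]
      rw [show i + 1 + (q : ℤ) + 1 = i + (q : ℤ) + 2 from by ring,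
        show i + 1 + (q : ℤ) + 2 = i + (q : ℤ) + 3 from by ring,
        show i + 1 + 1 = i + 2 from by ring]
    apply hsum.congr_deriv
    rw [expand1, expand2]
    field_simp
    ring

/-- Change of indexing: the paper's B-splines coincide with the standard ones. -/
lemma Bspline_eq_Nsp (x : ℤ → ℝ) :
    ∀ (n : ℕ) (k : ℤ) (t : ℝ),
      Bspline x (n + 1) k t = Nsp x (n + 1) (k - (((n + 1) / 2 : ℕ) : ℤ)) t := by
  intro n
  induction n with
  | zero => intro k t; simp [Bspline, Nsp]
  | succ m ih =>
    intro k t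
    rw [show m + 1 + 1 = m + 2 from rfl, Bspline, ih, ih, Nsp]
    have e1 : k - 1 + (((m + 2) % 2 : ℕ) : ℤ) - (((m + 1) / 2 : ℕ) : ℤ)
        = k - (((m + 2) / 2 : ℕ) : ℤ) := by omega
    have e2 : k + (((m + 2) % 2 : ℕ) : ℤ) - (((m + 1) / 2 : ℕ) : ℤ)
        = k - (((m + 2) / 2 : ℕ) : ℤ) + 1 := by omega
    have e3 : k + (((m + 3) / 2 : ℕ) : ℤ) - 1
        = k - (((m + 2) / 2 : ℕ) : ℤ) + (m : ℤ) + 1 := by omega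
    have e4 : k + (((m + 3) / 2 : ℕ) : ℤ)
        = k - (((m + 2) / 2 : ℕ) : ℤ) + (m : ℤ) + 2 := by omega
    rw [e1, e2, e3, e4]

/-- on every open interval between consecutive knots, the
derivative of the B-spline of order `p ≥ 2` is given by the difference formula
of Lemma 1 of the paper, with `r = p - 2⌊p/2⌋ = p % 2`. -/
theorem bspline_hasDerivAt
    (x : ℤ → ℝ) (hx : StrictMono x) (p : ℕ) (hp : 2 ≤ p) (k m : ℤ)
    (t : ℝ) (ht : t ∈ Set.Ioo (x m) (x (m + 1))) :
    HasDerivAt (Bspline x p k)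
      (((p : ℝ) - 1) *
        (Bspline x (p - 1) (k - 1 + ((p % 2 : ℕ) : ℤ)) t /
            (x (k + ((p + 1) / 2 : ℕ) - 1) - x (k - (p / 2 : ℕ))) -
          Bspline x (p - 1) (k + ((p % 2 : ℕ) : ℤ)) t /
            (x (k + ((p + 1) / 2 : ℕ)) - x (k - (p / 2 : ℕ) + 1)))) t := by
  obtain ⟨n, rfl⟩ : ∃ n, p = n + 2 := ⟨p - 2, by omega⟩
  have hfun : Bspline x (n + 2) k = Nsp x (n + 2) (k - (((n + 2) / 2 : ℕ) : ℤ)) := by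
    funext s
    exact Bspline_eq_Nsp x (n + 1) k s
  rw [hfun]
  have e1 : Bspline x (n + 2 - 1) (k - 1 + (((n + 2) % 2 : ℕ) : ℤ)) t
      = Nsp x (n + 1) (k - (((n + 2) / 2 : ℕ) : ℤ)) t := by
    rw [show n + 2 - 1 = n + 1 from rfl, Bspline_eq_Nsp x n]
    congr 1
    omega
  have e2 : Bspline x (n + 2 - 1) (k + (((n + 2) % 2 : ℕ) : ℤ)) t
      = Nsp x (n + 1) (k - (((n + 2) / 2 : ℕ) : ℤ) + 1) t := by
    rw [show n + 2 - 1 = n + 1 from rfl, Bspline_eq_Nsp x n]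
    congr 1
    omega
  have e3 : k + (((n + 2 + 1) / 2 : ℕ) : ℤ) - 1
      = k - (((n + 2) / 2 : ℕ) : ℤ) + (n : ℤ) + 1 := by omega
  have e4 : (k - (((n + 2) / 2 : ℕ) : ℤ)) = k - (((n + 2) / 2 : ℕ) : ℤ) := rfl
  have e5 : k + (((n + 2 + 1) / 2 : ℕ) : ℤ)
      = k - (((n + 2) / 2 : ℕ) : ℤ) + (n : ℤ) + 2 := by omega
  rw [e1, e2, e3, e5]
  have := Nsp_hasDerivAt x hx n (k - (((n + 2) / 2 : ℕ) : ℤ)) m t ht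
  apply this.congr_deriv
  push_cast
  ring
end

section
/- Let p ≥ 2 and let s : ℤ → ℝ be a finitely supported family of coefficients. Set f(t) = Σ_{k∈ℤ} s_k φ_k^[p](t). Then on every open interval (x_m, x_{m+1}) between consecutive knots, f is differentiable with f'(t) = (p−1) · Σ_{k∈ℤ} ((s_k − s_{k−1}) / (x_{k+⌈p/2⌉−1} − x_{k−⌊p/2⌋})) · φ_{k−r'}^[p−1](t), where r' = 1 − (p − 2⌊p/2⌋). -/
lemma Bspline.rec_even (x : ℤ → ℝ) (j : ℕ) (k : ℤ) :
    Bspline x (2*j+2) k = fun t =>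
      ((t - x (k - ((j:ℤ)+1))) / (x (k + (j:ℤ)) - x (k - ((j:ℤ)+1)))) * Bspline x (2*j+1) (k-1) t +
      ((x (k + (j:ℤ) + 1) - t) / (x (k + (j:ℤ) + 1) - x (k - (j:ℤ)))) * Bspline x (2*j+1) k t := by
  funext t
  rw [show 2*j+2 = (2*j) + 2 from by ring]
  simp only [Bspline]
  rw [show ((2*j+2)/2 : ℕ) = j+1 from by omega, show ((2*j+3)/2 : ℕ) = j+1 from by omega,
    show ((2*j+2)%2 : ℕ) = 0 from by omega]
  push_cast
  ring_nf

lemma Bspline.rec_odd (x : ℤ → ℝ) (j : ℕ) (k : ℤ) :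
    Bspline x (2*j+3) k = fun t =>
      ((t - x (k - ((j:ℤ)+1))) / (x (k + (j:ℤ) + 1) - x (k - ((j:ℤ)+1)))) * Bspline x (2*j+2) k t +
      ((x (k + (j:ℤ) + 2) - t) / (x (k + (j:ℤ) + 2) - x (k - (j:ℤ)))) * Bspline x (2*j+2) (k+1) t := by
  funext t
  rw [show 2*j+3 = (2*j+1) + 2 from by ring]
  simp only [Bspline]
  rw [show ((2*j+1+2)/2 : ℕ) = j+1 from by omega, show ((2*j+1+3)/2 : ℕ) = j+2 from by omega,
    show ((2*j+1+2)%2 : ℕ) = 1 from by omega]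
  push_cast
  ring_nf

lemma Bspline.one_congr (x : ℤ → ℝ) (hx : StrictMono x) {m : ℤ} (j : ℤ) {t u : ℝ}
    (ht : t ∈ Set.Ioo (x m) (x (m+1))) (hu : u ∈ Set.Ioo (x m) (x (m+1))) :
    Bspline x 1 j u = Bspline x 1 j t := by
  have key : ∀ v : ℝ, v ∈ Set.Ioo (x m) (x (m+1)) → ((x j ≤ v ∧ v < x (j+1)) ↔ j = m) := by
    intro v hv
    constructor
    · rintro ⟨h1, h2⟩
      have hjm : j < m + 1 := hx.lt_iff_lt.mp (lt_of_le_of_lt h1 hv.2)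
      have hmj : m < j + 1 := hx.lt_iff_lt.mp (lt_trans hv.1 h2)
      omega
    · rintro rfl
      exact ⟨hv.1.le, hv.2⟩
  show (if x j ≤ u ∧ u < x (j+1) then (1:ℝ) else 0) = (if x j ≤ t ∧ t < x (j+1) then 1 else 0)
  rw [if_congr ((key u hu).trans (key t ht).symm) rfl rfl]

/-- The key algebraic identity behind the induction step. -/
lemma Bspline.key_algebra (t y1 y2 y3 y4 y5 y6 C0 C1 C2 c : ℝ)
    (h41 : y4 - y1 ≠ 0) (h52 : y5 - y2 ≠ 0) (h51 : y5 - y1 ≠ 0)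
    (h62 : y6 - y2 ≠ 0) (h63 : y6 - y3 ≠ 0) :
    (c+1) * ( (((t - y1)/(y4-y1)) * C0 + ((y5-t)/(y5-y2)) * C1) / (y5-y1)
           - (((t - y2)/(y5-y2)) * C1 + ((y6-t)/(y6-y3)) * C2) / (y6-y2) )
    = 1/(y5-y1) * (((t - y1)/(y4-y1)) * C0 + ((y5-t)/(y5-y2)) * C1)
      + ((t - y1)/(y5-y1)) * (c * (C0/(y4-y1) - C1/(y5-y2)))
      + ((0-1)/(y6-y2) * (((t - y2)/(y5-y2)) * C1 + ((y6-t)/(y6-y3)) * C2)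
      + ((y6-t)/(y6-y2)) * (c * (C1/(y5-y2) - C2/(y6-y3)))) := by
  field_simp
  ring

/-- Derivative statement for even orders `2j+2`. -/
def BsplineP1 (x : ℤ → ℝ) (t : ℝ) (j : ℕ) : Prop := ∀ k : ℤ,
  HasDerivAt (Bspline x (2*j+2) k)
    ((2*(j:ℝ)+1) * (Bspline x (2*j+1) (k-1) t / (x (k+(j:ℤ)) - x (k-((j:ℤ)+1)))
      - Bspline x (2*j+1) k t / (x (k+(j:ℤ)+1) - x (k-(j:ℤ))))) t

/-- Derivative statement for odd orders `2j+3`. -/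
def BsplineP2 (x : ℤ → ℝ) (t : ℝ) (j : ℕ) : Prop := ∀ k : ℤ,
  HasDerivAt (Bspline x (2*j+3) k)
    ((2*(j:ℝ)+2) * (Bspline x (2*j+2) k t / (x (k+(j:ℤ)+1) - x (k-((j:ℤ)+1)))
      - Bspline x (2*j+2) (k+1) t / (x (k+(j:ℤ)+2) - x (k-(j:ℤ))))) t

lemma Bspline.step12 (x : ℤ → ℝ) (hx : StrictMono x) (t : ℝ) (j : ℕ)
    (ih : BsplineP1 x t j) : BsplineP2 x t j := by
  intro k
  have hne : ∀ a b : ℤ, a < b → x b - x a ≠ 0 := fun a b h => sub_ne_zero.mpr (hx h).ne'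
  rw [Bspline.rec_odd x j k]
  have h1 : HasDerivAt (fun u : ℝ => (u - x (k - ((j:ℤ)+1))) / (x (k + (j:ℤ) + 1) - x (k - ((j:ℤ)+1))))
      (1 / (x (k + (j:ℤ) + 1) - x (k - ((j:ℤ)+1)))) t :=
    ((hasDerivAt_id t).sub_const _).div_const _
  have h2 : HasDerivAt (fun u : ℝ => (x (k + (j:ℤ) + 2) - u) / (x (k + (j:ℤ) + 2) - x (k - (j:ℤ))))
      ((0 - 1) / (x (k + (j:ℤ) + 2) - x (k - (j:ℤ)))) t :=
    ((hasDerivAt_const t _).sub (hasDerivAt_id t)).div_const _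
  have H := (h1.mul (ih k)).add (h2.mul (ih (k+1)))
  convert H using 1
  · rfl
  · rfl
  · rfl
  rw [congrFun (Bspline.rec_even x j k) t, congrFun (Bspline.rec_even x j (k+1)) t]
  simp only [show (k+1-1 : ℤ) = k from by ring, show (k+1+(j:ℤ) : ℤ) = k+(j:ℤ)+1 from by ring,
    show (k+(j:ℤ)+1+1 : ℤ) = k+(j:ℤ)+2 from by ring,
    show (k+1-((j:ℤ)+1) : ℤ) = k-(j:ℤ) from by ring,
    show (k+1-(j:ℤ) : ℤ) = k-(j:ℤ)+1 from by ring]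
  rw [show (2*(j:ℝ)+2) = (2*(j:ℝ)+1)+1 from by ring]
  exact Bspline.key_algebra t (x (k-((j:ℤ)+1))) (x (k-(j:ℤ))) (x (k-(j:ℤ)+1)) (x (k+(j:ℤ)))
    (x (k+(j:ℤ)+1)) (x (k+(j:ℤ)+2)) (Bspline x (2*j+1) (k-1) t) (Bspline x (2*j+1) k t)
    (Bspline x (2*j+1) (k+1) t) (2*(j:ℝ)+1)
    (hne _ _ (by omega)) (hne _ _ (by omega)) (hne _ _ (by omega))
    (hne _ _ (by omega)) (hne _ _ (by omega))

lemma Bspline.step21 (x : ℤ → ℝ) (hx : StrictMono x) (t : ℝ) (j : ℕ)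
    (ih : BsplineP2 x t j) : BsplineP1 x t (j+1) := by
  intro k
  have hne : ∀ a b : ℤ, a < b → x b - x a ≠ 0 := fun a b h => sub_ne_zero.mpr (hx h).ne'
  rw [Bspline.rec_even x (j+1) k]
  have h1 : HasDerivAt (fun u : ℝ => (u - x (k - (((j+1:ℕ)):ℤ)-1)) / (x (k + ((j+1:ℕ):ℤ)) - x (k - ((j+1:ℕ):ℤ)-1)))
      (1 / (x (k + ((j+1:ℕ):ℤ)) - x (k - ((j+1:ℕ):ℤ)-1))) t :=
    ((hasDerivAt_id t).sub_const _).div_const _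
  have h2 : HasDerivAt (fun u : ℝ => (x (k + ((j+1:ℕ):ℤ) + 1) - u) / (x (k + ((j+1:ℕ):ℤ) + 1) - x (k - ((j+1:ℕ):ℤ))))
      ((0 - 1) / (x (k + ((j+1:ℕ):ℤ) + 1) - x (k - ((j+1:ℕ):ℤ)))) t :=
    ((hasDerivAt_const t _).sub (hasDerivAt_id t)).div_const _
  have H := (h1.mul (ih (k-1))).add (h2.mul (ih k))
  convert H using 1
  · rfl
  · rfl
  · funext u
    norm_num
    ring_nf
  · rw [show 2*(j+1)+1 = 2*j+3 from by ring]
    rw [congrFun (Bspline.rec_odd x j (k-1)) t, congrFun (Bspline.rec_odd x j k) t]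
    push_cast
    simp only [show (k-1+(j:ℤ)+1 : ℤ) = k+(j:ℤ) from by ring,
      show (k-1+(j:ℤ)+2 : ℤ) = k+(j:ℤ)+1 from by ring,
      show (k-1-((j:ℤ)+1) : ℤ) = k-((j:ℤ)+2) from by ring,
      show (k-1-(j:ℤ) : ℤ) = k-((j:ℤ)+1) from by ring,
      show (k-1+1 : ℤ) = k from by ring,
      show (k-((j:ℤ)+1)-1 : ℤ) = k-((j:ℤ)+2) from by ring,
      show (k+((j:ℤ)+1) : ℤ) = k+(j:ℤ)+1 from by ring,
      show (k+(j:ℤ)+1+1 : ℤ) = k+(j:ℤ)+2 from by ring,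
      show (k-((j:ℤ)+1+1) : ℤ) = k-((j:ℤ)+2) from by ring]
    rw [show (2*((j:ℝ)+1)+1) = (2*(j:ℝ)+2)+1 from by ring]
    exact Bspline.key_algebra t (x (k-((j:ℤ)+2))) (x (k-((j:ℤ)+1))) (x (k-(j:ℤ))) (x (k+(j:ℤ)))
      (x (k+(j:ℤ)+1)) (x (k+(j:ℤ)+2)) (Bspline x (2*j+2) (k-1) t) (Bspline x (2*j+2) k t)
      (Bspline x (2*j+2) (k+1) t) (2*(j:ℝ)+2)
      (hne _ _ (by omega)) (hne _ _ (by omega)) (hne _ _ (by omega))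
      (hne _ _ (by omega)) (hne _ _ (by omega))

lemma Bspline.base1 (x : ℤ → ℝ) (hx : StrictMono x) (m : ℤ) {t : ℝ}
    (ht : t ∈ Set.Ioo (x m) (x (m+1))) : BsplineP1 x t 0 := by
  intro k
  have hcongr : ∀ j : ℤ, ∀ u ∈ Set.Ioo (x m) (x (m+1)), Bspline x 1 j u = Bspline x 1 j t :=
    fun j u hu => Bspline.one_congr x hx j ht hu
  have hd : HasDerivAt (fun u : ℝ =>
      ((u - x (k - ((0:ℕ):ℤ)-1)) / (x (k + ((0:ℕ):ℤ)) - x (k - ((0:ℕ):ℤ)-1))) * Bspline x 1 (k-1) t +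
      ((x (k + ((0:ℕ):ℤ) + 1) - u) / (x (k + ((0:ℕ):ℤ) + 1) - x (k - ((0:ℕ):ℤ)))) * Bspline x 1 k t)
      (1 / (x (k + ((0:ℕ):ℤ)) - x (k - ((0:ℕ):ℤ)-1)) * Bspline x 1 (k-1) t +
       (0-1) / (x (k + ((0:ℕ):ℤ) + 1) - x (k - ((0:ℕ):ℤ))) * Bspline x 1 k t) t :=
    ((((hasDerivAt_id t).sub_const _).div_const _).mul_const _).add
      ((((hasDerivAt_const t _).sub (hasDerivAt_id t)).div_const _).mul_const _)
  have hev : (Bspline x (2*0+2) k) =ᶠ[nhds t] (fun u : ℝ =>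
      ((u - x (k - ((0:ℕ):ℤ)-1)) / (x (k + ((0:ℕ):ℤ)) - x (k - ((0:ℕ):ℤ)-1))) * Bspline x 1 (k-1) t +
      ((x (k + ((0:ℕ):ℤ) + 1) - u) / (x (k + ((0:ℕ):ℤ) + 1) - x (k - ((0:ℕ):ℤ)))) * Bspline x 1 k t) := by
    filter_upwards [isOpen_Ioo.mem_nhds ht] with u hu
    rw [congrFun (Bspline.rec_even x 0 k) u, hcongr (k-1) u hu, hcongr k u hu]
    norm_num
  have := hd.congr_of_eventuallyEq hev
  convert this using 1
  · rfl
  · rfl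
  push_cast
  ring_nf

lemma Bspline.P_all (x : ℤ → ℝ) (hx : StrictMono x) (m : ℤ) {t : ℝ}
    (ht : t ∈ Set.Ioo (x m) (x (m+1))) : ∀ j : ℕ, BsplineP1 x t j ∧ BsplineP2 x t j := by
  intro j
  induction j with
  | zero =>
    exact ⟨Bspline.base1 x hx m ht, Bspline.step12 x hx t 0 (Bspline.base1 x hx m ht)⟩
  | succ n ih =>
    have h1 := Bspline.step21 x hx t n ih.2
    exact ⟨h1, Bspline.step12 x hx t (n+1) h1⟩

lemma Bspline.finsum_deriv {t : ℝ} (c : ℝ) (s : ℤ → ℝ) (hs : (Function.support s).Finite)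
    (F : ℤ → ℝ → ℝ) (G : ℤ → ℝ)
    (hF : ∀ k, HasDerivAt (F k) (c * (G k - G (k+1))) t) :
    HasDerivAt (fun u => ∑ᶠ k : ℤ, s k * F k u) (c * ∑ᶠ k : ℤ, (s k - s (k-1)) * G k) t := by
  classical
  set S : Finset ℤ := hs.toFinset with hS
  set U : Finset ℤ := S ∪ S.image (· + 1) with hU
  set V : Finset ℤ := U ∪ U.image (· + 1) with hV
  have hSV : ∀ k : ℤ, s k ≠ 0 → k ∈ V := by
    intro k hk
    have : k ∈ S := hs.mem_toFinset.mpr hk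
    simp [hV, hU, this]
  have hSV' : ∀ k : ℤ, s (k-1) ≠ 0 → k ∈ V := by
    intro k hk
    have h1 : k - 1 ∈ S := hs.mem_toFinset.mpr hk
    have : k ∈ S.image (· + 1) := Finset.mem_image.mpr ⟨k-1, h1, by ring⟩
    simp only [hV, hU, Finset.mem_union]
    tauto
  have hfun : (fun u => ∑ᶠ k : ℤ, s k * F k u) = fun u => ∑ k ∈ V, s k * F k u := by
    funext u
    apply finsum_eq_finset_sum_of_support_subset
    intro k hk
    have : s k ≠ 0 := by
      intro h; apply hk; simp [h]
    exact hSV k this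
  have hsum : (∑ᶠ k : ℤ, (s k - s (k-1)) * G k) = ∑ k ∈ V, (s k - s (k-1)) * G k := by
    apply finsum_eq_finset_sum_of_support_subset
    intro k hk
    by_cases h1 : s k = 0
    · by_cases h2 : s (k-1) = 0
      · exfalso; apply hk; simp [h1, h2]
      · exact hSV' k h2
    · exact hSV k h1
  rw [hfun, hsum]
  have hd : HasDerivAt (fun u => ∑ k ∈ V, s k * F k u)
      (∑ k ∈ V, s k * (c * (G k - G (k+1)))) t :=
    HasDerivAt.fun_sum fun k _ => (hF k).const_mul (s k)
  have key : ∑ k ∈ V, s k * G (k+1) = ∑ k ∈ V, s (k-1) * G k := by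
    have e1 : ∑ k ∈ V, s k * G (k+1) = ∑ k ∈ V.image (· + 1), s (k-1) * G k := by
      rw [Finset.sum_image (by intro a _ b _ h; have h' : a + 1 = b + 1 := h; omega)]
      apply Finset.sum_congr rfl
      intro k _
      norm_num
    rw [e1]
    have hsub1 : V.image (· + 1) ⊆ V ∪ V.image (· + 1) := Finset.subset_union_right
    have hsub2 : V ⊆ V ∪ V.image (· + 1) := Finset.subset_union_left
    have z1 : ∀ k ∈ V ∪ V.image (· + 1), k ∉ V.image (· + 1) → s (k-1) * G k = 0 := by
      intro k _ hknot
      have : s (k-1) = 0 := by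
        by_contra h
        apply hknot
        have h1 : k - 1 ∈ S := hs.mem_toFinset.mpr h
        have h2 : k - 1 ∈ V := by simp only [hV, hU, Finset.mem_union]; left; left; exact h1
        exact Finset.mem_image.mpr ⟨k-1, h2, by ring⟩
      simp [this]
    have z2 : ∀ k ∈ V ∪ V.image (· + 1), k ∉ V → s (k-1) * G k = 0 := by
      intro k _ hknot
      have : s (k-1) = 0 := by
        by_contra h
        apply hknot
        have h1 : k - 1 ∈ S := hs.mem_toFinset.mpr h
        have h2 : k ∈ S.image (· + 1) := Finset.mem_image.mpr ⟨k-1, h1, by ring⟩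
        simp only [hV, hU, Finset.mem_union]; tauto
      simp [this]
    calc ∑ k ∈ V.image (· + 1), s (k-1) * G k
        = ∑ k ∈ V ∪ V.image (· + 1), s (k-1) * G k := Finset.sum_subset hsub1 z1
      _ = ∑ k ∈ V, s (k-1) * G k := (Finset.sum_subset hsub2 z2).symm
  have : ∑ k ∈ V, s k * (c * (G k - G (k+1))) = c * ∑ k ∈ V, (s k - s (k-1)) * G k := by
    rw [Finset.mul_sum]
    rw [show ∑ k ∈ V, s k * (c * (G k - G (k+1)))
        = ∑ k ∈ V, (c * (s k * G k) - c * (s k * G (k+1))) from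
      Finset.sum_congr rfl fun k _ => by ring]
    rw [Finset.sum_sub_distrib]
    rw [show ∑ k ∈ V, c * (s k * G (k+1)) = c * ∑ k ∈ V, s k * G (k+1) from by
      rw [Finset.mul_sum]]
    rw [key]
    rw [show ∑ k ∈ V, c * (s k * G k) = c * ∑ k ∈ V, s k * G k from by rw [Finset.mul_sum]]
    rw [← mul_sub, ← Finset.sum_sub_distrib, Finset.mul_sum]
    congr 1
    funext k
    ring
  rw [← this]
  exact hd

/-- derivative of a finitely supported B-spline combination: on
each open interval between consecutive knots, `f = ∑ₖ sₖ φ_k^[p]` is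
differentiable with derivative
`(p-1) ∑ₖ ((sₖ - s_{k-1})/(x_{k+⌈p/2⌉-1} - x_{k-⌊p/2⌋})) φ_{k-r'}^[p-1]`,
where `r' = 1 - (p % 2)`. -/
theorem bspline_combination_hasDerivAt
    (x : ℤ → ℝ) (hx : StrictMono x) (p : ℕ) (hp : 2 ≤ p)
    (s : ℤ → ℝ) (hs : (Function.support s).Finite) (m : ℤ) (t : ℝ)
    (ht : t ∈ Set.Ioo (x m) (x (m + 1))) :
    HasDerivAt (fun u : ℝ => ∑ᶠ k : ℤ, s k * Bspline x p k u)
      (((p : ℝ) - 1) * ∑ᶠ k : ℤ,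
        ((s k - s (k - 1)) / (x (k + ((p + 1) / 2 : ℕ) - 1) - x (k - (p / 2 : ℕ)))) *
          Bspline x (p - 1) (k - (1 - ((p % 2 : ℕ) : ℤ))) t) t := by
  rcases Nat.even_or_odd p with he | ho
  · -- p = 2j+2
    obtain ⟨c, hc⟩ := he
    obtain ⟨j, hj⟩ : ∃ j, p = 2*j+2 := ⟨c - 1, by omega⟩
    subst hj
    have hP := (Bspline.P_all x hx m ht j).1
    set G : ℤ → ℝ :=
      fun i => Bspline x (2*j+1) (i-1) t / (x (i+(j:ℤ)) - x (i-((j:ℤ)+1))) with hG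
    have hF : ∀ k : ℤ, HasDerivAt (Bspline x (2*j+2) k)
        ((2*(j:ℝ)+1) * (G k - G (k+1))) t := by
      intro k
      have h0 := hP k
      rw [hG]
      simp only
      rw [show (k+1-1 : ℤ) = k from by ring, show (k+1+(j:ℤ) : ℤ) = k+(j:ℤ)+1 from by ring,
        show (k+1-((j:ℤ)+1) : ℤ) = k-(j:ℤ) from by ring]
      exact h0
    have H := Bspline.finsum_deriv (2*(j:ℝ)+1) s hs (Bspline x (2*j+2)) G hF
    rw [show ((2*j+2+1)/2 : ℕ) = j+1 from by omega, show ((2*j+2)/2 : ℕ) = j+1 from by omega,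
      show ((2*j+2)%2 : ℕ) = 0 from by omega, show (2*j+2-1 : ℕ) = 2*j+1 from by omega]
    push_cast
    simp only [show ∀ a : ℤ, a + ((j:ℤ)+1) - 1 = a + (j:ℤ) from fun a => by ring, sub_zero,
      div_mul_eq_mul_div, mul_div_assoc]
    rw [show ((2:ℝ)*(j:ℝ)+2-1) = 2*(j:ℝ)+1 from by ring]
    exact H
  · -- p = 2j+3
    obtain ⟨c, hc⟩ := ho
    obtain ⟨j, hj⟩ : ∃ j, p = 2*j+3 := ⟨c - 1, by omega⟩
    subst hj
    have hP := (Bspline.P_all x hx m ht j).2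
    set G : ℤ → ℝ :=
      fun i => Bspline x (2*j+2) i t / (x (i+(j:ℤ)+1) - x (i-((j:ℤ)+1))) with hG
    have hF : ∀ k : ℤ, HasDerivAt (Bspline x (2*j+3) k)
        ((2*(j:ℝ)+2) * (G k - G (k+1))) t := by
      intro k
      have h0 := hP k
      rw [hG]
      simp only
      rw [show (k+1+(j:ℤ)+1 : ℤ) = k+(j:ℤ)+2 from by ring,
        show (k+1-((j:ℤ)+1) : ℤ) = k-(j:ℤ) from by ring]
      exact h0
    have H := Bspline.finsum_deriv (2*(j:ℝ)+2) s hs (Bspline x (2*j+3)) G hF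
    rw [show ((2*j+3+1)/2 : ℕ) = j+2 from by omega, show ((2*j+3)/2 : ℕ) = j+1 from by omega,
      show ((2*j+3)%2 : ℕ) = 1 from by omega, show (2*j+3-1 : ℕ) = 2*j+2 from by omega]
    push_cast
    simp only [show ∀ a : ℤ, a + ((j:ℤ)+2) - 1 = a + (j:ℤ) + 1 from fun a => by ring,
      sub_self, sub_zero, div_mul_eq_mul_div, mul_div_assoc]
    rw [show ((2:ℝ)*(j:ℝ)+3-1) = 2*(j:ℝ)+2 from by ring]
    exact H
end

section
/- Partition of unity: for every integer p ≥ 1 and every t ∈ ℝ, the (finitely supported) sum of all B-splines of order p satisfies Σ_{k∈ℤ} φ_k^[p](t) = 1. -/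
lemma bspline_support (x : ℤ → ℝ) (hx : StrictMono x) :
    ∀ p : ℕ, ∀ k : ℤ, ∀ t : ℝ, Bspline x p k t ≠ 0 →
      x (k - ((p / 2 : ℕ) : ℤ)) ≤ t ∧ t < x (k + (((p + 1) / 2 : ℕ) : ℤ)) := by
  intro p
  induction p using Nat.strong_induction_on with
  | _ p ih =>
    match p with
    | 0 => intro k t h; simp [Bspline] at h
    | 1 =>
      intro k t h
      simp only [Bspline] at h
      split_ifs at h with hc
      · obtain ⟨h1, h2⟩ := hc
        refine ⟨?_, ?_⟩
        · simpa using h1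
        · simpa using h2
      · exact absurd rfl h
    | p + 2 =>
      intro k t h
      simp only [Bspline] at h
      have hor : Bspline x (p + 1) (k - 1 + ((p + 2) % 2 : ℕ)) t ≠ 0 ∨
          Bspline x (p + 1) (k + ((p + 2) % 2 : ℕ)) t ≠ 0 := by
        by_contra hcon
        push_neg at hcon
        rw [hcon.1, hcon.2] at h
        simp at h
      rcases hor with h1 | h1
      · obtain ⟨ha, hb⟩ := ih (p + 1) (by omega) _ t h1
        refine ⟨le_trans (hx.monotone ?_) ha, lt_of_lt_of_le hb (hx.monotone ?_)⟩ <;> omega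
      · obtain ⟨ha, hb⟩ := ih (p + 1) (by omega) _ t h1
        refine ⟨le_trans (hx.monotone ?_) ha, lt_of_lt_of_le hb (hx.monotone ?_)⟩ <;> omega

lemma shift_sum (F : ℤ → ℝ) (a b c : ℤ) :
    ∑ k ∈ Finset.Icc a b, F (k + c) = ∑ j ∈ Finset.Icc (a + c) (b + c), F j := by
  rw [← Finset.map_add_right_Icc, Finset.sum_map]
  rfl

lemma bspline_sum (x : ℤ → ℝ) (hx : StrictMono x) (t : ℝ) (k0 : ℤ)
    (h1 : x k0 ≤ t) (h2 : t < x (k0 + 1)) :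
    ∀ p : ℕ, 1 ≤ p → ∀ n : ℕ, p ≤ n →
      ∑ k ∈ Finset.Icc (k0 - (n : ℤ)) (k0 + (n : ℤ)), Bspline x p k t = 1 := by
  intro p
  induction p using Nat.strong_induction_on with
  | _ p ih =>
    match p with
    | 0 => omega
    | 1 =>
      intro _ n hn
      rw [Finset.sum_eq_single k0]
      · simp [Bspline, h1, h2]
      · intro b hb hbk
        simp only [Bspline]
        rw [if_neg]
        rintro ⟨hb1, hb2⟩
        rcases lt_or_gt_of_ne hbk with hlt | hgt
        · exact absurd (lt_of_le_of_lt h1 hb2) (not_lt.mpr (hx.monotone (by omega)))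
        · exact absurd (lt_of_le_of_lt hb1 h2) (not_lt.mpr (hx.monotone (by omega)))
      · intro hmem
        exfalso
        apply hmem
        rw [Finset.mem_Icc]
        omega
    | p + 2 =>
      intro _ n hn
      -- support bound for order p+1 splines
      have key : ∀ j : ℤ, Bspline x (p + 1) j t ≠ 0 →
          (k0 : ℤ) - (((p + 2) / 2 : ℕ) : ℤ) < j ∧ j - (((p + 1) / 2 : ℕ) : ℤ) ≤ k0 := by
        intro j hj
        obtain ⟨hl, hr⟩ := bspline_support x hx (p + 1) j t hj
        constructor
        · have := hx.lt_iff_lt.mp (lt_of_le_of_lt h1 hr)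
          omega
        · have := hx.lt_iff_lt.mp (lt_of_le_of_lt hl h2)
          omega
      simp only [Bspline]
      rw [Finset.sum_add_distrib]
      set S : Finset ℤ := Finset.Icc (k0 - ((n : ℤ) + 1)) (k0 + ((n : ℤ) + 1)) with hS
      have hsum1 : ∑ k ∈ Finset.Icc (k0 - (n : ℤ)) (k0 + (n : ℤ)),
          ((t - x (k - ((p + 2) / 2 : ℕ))) /
            (x (k + ((p + 3) / 2 : ℕ) - 1) - x (k - ((p + 2) / 2 : ℕ)))) *
            Bspline x (p + 1) (k - 1 + ((p + 2) % 2 : ℕ)) t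
          = ∑ j ∈ S, ((t - x (j + 1 - ((p + 2) % 2 : ℕ) - ((p + 2) / 2 : ℕ))) /
              (x (j + ((p + 2) / 2 : ℕ)) - x (j + 1 - ((p + 2) % 2 : ℕ) - ((p + 2) / 2 : ℕ)))) *
              Bspline x (p + 1) j t := by
        have e1 : ∀ k : ℤ,
            ((t - x (k - ((p + 2) / 2 : ℕ))) /
              (x (k + ((p + 3) / 2 : ℕ) - 1) - x (k - ((p + 2) / 2 : ℕ)))) *
              Bspline x (p + 1) (k - 1 + ((p + 2) % 2 : ℕ)) t
            = (fun j => ((t - x (j + 1 - ((p + 2) % 2 : ℕ) - ((p + 2) / 2 : ℕ))) /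
              (x (j + ((p + 2) / 2 : ℕ)) - x (j + 1 - ((p + 2) % 2 : ℕ) - ((p + 2) / 2 : ℕ)))) *
              Bspline x (p + 1) j t) (k + (((p + 2) % 2 : ℕ) - 1)) := by
          intro k
          have c3 : k + (((p + 2) % 2 : ℕ) - 1) = k - 1 + ((p + 2) % 2 : ℕ) := by omega
          have c1 : k - 1 + ((p + 2) % 2 : ℕ) + 1 - ((p + 2) % 2 : ℕ) - ((p + 2) / 2 : ℕ)
              = k - ((p + 2) / 2 : ℕ) := by omega
          have c2 : k - 1 + ((p + 2) % 2 : ℕ) + ((p + 2) / 2 : ℕ)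
              = k + ((p + 3) / 2 : ℕ) - 1 := by omega
          simp only [c3, c1, c2]
        calc ∑ k ∈ Finset.Icc (k0 - (n : ℤ)) (k0 + (n : ℤ)),
              ((t - x (k - ((p + 2) / 2 : ℕ))) /
                (x (k + ((p + 3) / 2 : ℕ) - 1) - x (k - ((p + 2) / 2 : ℕ)))) *
                Bspline x (p + 1) (k - 1 + ((p + 2) % 2 : ℕ)) t
            = ∑ j ∈ Finset.Icc (k0 - (n : ℤ) + (((p + 2) % 2 : ℕ) - 1))
                  (k0 + (n : ℤ) + (((p + 2) % 2 : ℕ) - 1)),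
                ((t - x (j + 1 - ((p + 2) % 2 : ℕ) - ((p + 2) / 2 : ℕ))) /
                  (x (j + ((p + 2) / 2 : ℕ)) - x (j + 1 - ((p + 2) % 2 : ℕ) - ((p + 2) / 2 : ℕ)))) *
                  Bspline x (p + 1) j t := by
              rw [← shift_sum]
              exact Finset.sum_congr rfl fun k _ => e1 k
          _ = _ := by
              apply Finset.sum_subset
              · intro j hj
                rw [Finset.mem_Icc] at hj ⊢
                omega
              · intro j hjS hj
                rw [Finset.mem_Icc] at hj
                rcases eq_or_ne (Bspline x (p + 1) j t) 0 with hz | hz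
                · rw [hz, mul_zero]
                · exfalso
                  obtain ⟨hk1, hk2⟩ := key j hz
                  omega
      have hsum2 : ∑ k ∈ Finset.Icc (k0 - (n : ℤ)) (k0 + (n : ℤ)),
          ((x (k + ((p + 3) / 2 : ℕ)) - t) /
            (x (k + ((p + 3) / 2 : ℕ)) - x (k - ((p + 2) / 2 : ℕ) + 1))) *
            Bspline x (p + 1) (k + ((p + 2) % 2 : ℕ)) t
          = ∑ j ∈ S, ((x (j + ((p + 2) / 2 : ℕ)) - t) /
              (x (j + ((p + 2) / 2 : ℕ)) - x (j + 1 - ((p + 2) % 2 : ℕ) - ((p + 2) / 2 : ℕ)))) *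
              Bspline x (p + 1) j t := by
        have e2 : ∀ k : ℤ,
            ((x (k + ((p + 3) / 2 : ℕ)) - t) /
              (x (k + ((p + 3) / 2 : ℕ)) - x (k - ((p + 2) / 2 : ℕ) + 1))) *
              Bspline x (p + 1) (k + ((p + 2) % 2 : ℕ)) t
            = (fun j => ((x (j + ((p + 2) / 2 : ℕ)) - t) /
              (x (j + ((p + 2) / 2 : ℕ)) - x (j + 1 - ((p + 2) % 2 : ℕ) - ((p + 2) / 2 : ℕ)))) *
              Bspline x (p + 1) j t) (k + ((p + 2) % 2 : ℕ)) := by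
          intro k
          have c1 : (k + ((p + 2) % 2 : ℕ)) + ((p + 2) / 2 : ℕ)
              = k + ((p + 3) / 2 : ℕ) := by omega
          have c2 : (k + ((p + 2) % 2 : ℕ)) + 1 - ((p + 2) % 2 : ℕ) - ((p + 2) / 2 : ℕ)
              = k - ((p + 2) / 2 : ℕ) + 1 := by omega
          simp only [c1, c2]
        calc ∑ k ∈ Finset.Icc (k0 - (n : ℤ)) (k0 + (n : ℤ)),
              ((x (k + ((p + 3) / 2 : ℕ)) - t) /
                (x (k + ((p + 3) / 2 : ℕ)) - x (k - ((p + 2) / 2 : ℕ) + 1))) *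
                Bspline x (p + 1) (k + ((p + 2) % 2 : ℕ)) t
            = ∑ j ∈ Finset.Icc (k0 - (n : ℤ) + ((p + 2) % 2 : ℕ))
                  (k0 + (n : ℤ) + ((p + 2) % 2 : ℕ)),
                ((x (j + ((p + 2) / 2 : ℕ)) - t) /
                  (x (j + ((p + 2) / 2 : ℕ)) - x (j + 1 - ((p + 2) % 2 : ℕ) - ((p + 2) / 2 : ℕ)))) *
                  Bspline x (p + 1) j t := by
              rw [← shift_sum]
              exact Finset.sum_congr rfl fun k _ => e2 k
          _ = _ := by
              apply Finset.sum_subset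
              · intro j hj
                rw [Finset.mem_Icc] at hj ⊢
                omega
              · intro j hjS hj
                rw [Finset.mem_Icc] at hj
                rcases eq_or_ne (Bspline x (p + 1) j t) 0 with hz | hz
                · rw [hz, mul_zero]
                · exfalso
                  obtain ⟨hk1, hk2⟩ := key j hz
                  omega
      rw [hsum1, hsum2, ← Finset.sum_add_distrib]
      have hterm : ∀ j ∈ S,
          ((t - x (j + 1 - ((p + 2) % 2 : ℕ) - ((p + 2) / 2 : ℕ))) /
              (x (j + ((p + 2) / 2 : ℕ)) - x (j + 1 - ((p + 2) % 2 : ℕ) - ((p + 2) / 2 : ℕ)))) *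
              Bspline x (p + 1) j t
          + ((x (j + ((p + 2) / 2 : ℕ)) - t) /
              (x (j + ((p + 2) / 2 : ℕ)) - x (j + 1 - ((p + 2) % 2 : ℕ) - ((p + 2) / 2 : ℕ)))) *
              Bspline x (p + 1) j t
          = Bspline x (p + 1) j t := by
        intro j _
        rw [← add_mul, ← add_div]
        have hlt : (j + 1 - ((p + 2) % 2 : ℕ) - ((p + 2) / 2 : ℕ) : ℤ) < j + ((p + 2) / 2 : ℕ) := by
          omega
        have hne : x (j + ((p + 2) / 2 : ℕ)) - x (j + 1 - ((p + 2) % 2 : ℕ) - ((p + 2) / 2 : ℕ)) ≠ 0 :=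
          sub_ne_zero_of_ne (hx hlt).ne'
        have hnum : t - x (j + 1 - ((p + 2) % 2 : ℕ) - ((p + 2) / 2 : ℕ))
            + (x (j + ((p + 2) / 2 : ℕ)) - t)
            = x (j + ((p + 2) / 2 : ℕ)) - x (j + 1 - ((p + 2) % 2 : ℕ) - ((p + 2) / 2 : ℕ)) := by
          ring
        rw [hnum, div_self hne, one_mul]
      rw [Finset.sum_congr rfl hterm]
      have := ih (p + 1) (by omega) (by omega) (n + 1) (by omega)
      rw [hS]
      push_cast at this
      convert this using 2

/-- partition of unity: for every order `p ≥ 1` and every `t ∈ ℝ`,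
only finitely many B-splines are nonzero at `t` and their sum equals `1`. -/
theorem bspline_partition_of_unity
    (x : ℤ → ℝ) (hx : StrictMono x)
    (htop : Filter.Tendsto x Filter.atTop Filter.atTop)
    (hbot : Filter.Tendsto x Filter.atBot Filter.atBot)
    (p : ℕ) (hp : 1 ≤ p) (t : ℝ) :
    {k : ℤ | Bspline x p k t ≠ 0}.Finite ∧
    ∑ᶠ k : ℤ, Bspline x p k t = 1 := by
  obtain ⟨a, ha⟩ : ∃ a : ℤ, x a ≤ t :=
    (hbot.eventually (Filter.eventually_le_atBot t)).exists
  obtain ⟨b, hb⟩ : ∃ b : ℤ, t < x b :=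
    (htop.eventually (Filter.eventually_gt_atTop t)).exists
  obtain ⟨lb, hlb, hmin⟩ := Int.exists_least_of_bdd
    (P := fun k : ℤ => t < x k)
    ⟨a, fun z hz => le_of_lt (hx.lt_iff_lt.mp (lt_of_le_of_lt ha hz))⟩ ⟨b, hb⟩
  set k0 : ℤ := lb - 1 with hk0def
  have h2 : t < x (k0 + 1) := by simpa [hk0def] using hlb
  have h1 : x k0 ≤ t := by
    by_contra hcon
    push_neg at hcon
    have := hmin k0 hcon
    omega
  have key : ∀ k : ℤ, Bspline x p k t ≠ 0 →
      k ∈ Finset.Icc (k0 - (p : ℤ)) (k0 + (p : ℤ)) := by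
    intro k hk
    obtain ⟨hl, hr⟩ := bspline_support x hx p k t hk
    have hA := hx.lt_iff_lt.mp (lt_of_le_of_lt h1 hr)
    have hB := hx.lt_iff_lt.mp (lt_of_le_of_lt hl h2)
    rw [Finset.mem_Icc]
    omega
  have hsupp : Function.support (fun k : ℤ => Bspline x p k t)
      ⊆ ↑(Finset.Icc (k0 - (p : ℤ)) (k0 + (p : ℤ))) := fun k hk => key k hk
  refine ⟨Set.Finite.subset (Finset.finite_toSet _) hsupp, ?_⟩
  rw [finsum_eq_finset_sum_of_support_subset _ hsupp]
  exact bspline_sum x hx t k0 h1 h2 p hp p le_rfl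
end

section
/- Reproduction of power functions: for every integer p ≥ 2, every q ∈ {0, 1, …, p−1} and every t ∈ ℝ, one has t^q = Σ_{k∈ℤ} x̃_k^{[p,q]} φ_k^[p](t), where the sum has only finitely many nonzero terms. -/
/-- The power coefficient `x̃_k^{[p,q]}`: the elementary symmetric polynomial of
degree `q` in the `p-1` knots `x_{k+1-⌊p/2⌋}, …, x_{k+⌈p/2⌉-1}`, divided by the
binomial coefficient `C(p-1, q)`. -/
noncomputable def powerCoef (x : ℤ → ℝ) (p q : ℕ) (k : ℤ) : ℝ :=
  (((Finset.Icc (k + 1 - (p / 2 : ℕ)) (k + ((p + 1) / 2 : ℕ) - 1)).val.map x).esymm q) /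
    (Nat.choose (p - 1) q)

noncomputable def psiR (x : ℤ → ℝ) (p : ℕ) (k : ℤ) (s : ℝ) : ℝ :=
  ∏ i ∈ Finset.Icc (k + 1 - ((p / 2 : ℕ) : ℤ)) (k + (((p + 1) / 2 : ℕ) : ℤ) - 1), (s - x i)

lemma Bspline_support {x : ℤ → ℝ} (hx : StrictMono x) (t : ℝ) :
    ∀ p : ℕ, ∀ k : ℤ, Bspline x (p + 1) k t ≠ 0 →
      x (k - (((p + 1) / 2 : ℕ) : ℤ)) ≤ t ∧ t < x (k + (((p + 2) / 2 : ℕ) : ℤ)) := by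
  intro p
  induction p with
  | zero =>
    intro k h
    simp only [Bspline] at h
    split_ifs at h with hc
    · refine ⟨?_, ?_⟩
      · have e : k - (((0 + 1) / 2 : ℕ) : ℤ) = k := by norm_num
        rw [e]; exact hc.1
      · have e : k + (((0 + 2) / 2 : ℕ) : ℤ) = k + 1 := by norm_num
        rw [e]; exact hc.2
    · exact absurd rfl h
  | succ p ih =>
    intro k h
    rw [show p + 1 + 1 = p + 2 by omega] at h
    have hcase : Bspline x (p + 1) (k - 1 + ((p + 2) % 2 : ℕ)) t ≠ 0 ∨
        Bspline x (p + 1) (k + ((p + 2) % 2 : ℕ)) t ≠ 0 := by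
      by_contra hc
      push_neg at hc
      rw [Bspline, hc.1, hc.2, mul_zero, mul_zero, add_zero] at h
      exact h rfl
    rcases hcase with h1 | h1
    · obtain ⟨hl, hr2⟩ := ih _ h1
      refine ⟨?_, ?_⟩
      · have e : k - 1 + (((p + 2) % 2 : ℕ) : ℤ) - (((p + 1) / 2 : ℕ) : ℤ)
            = k - (((p + 1 + 1) / 2 : ℕ) : ℤ) := by omega
        rw [← e]; exact hl
      · have e : k - 1 + (((p + 2) % 2 : ℕ) : ℤ) + (((p + 2) / 2 : ℕ) : ℤ)
            ≤ k + (((p + 1 + 2) / 2 : ℕ) : ℤ) := by omega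
        exact lt_of_lt_of_le hr2 (hx.monotone e)
    · obtain ⟨hl, hr2⟩ := ih _ h1
      refine ⟨?_, ?_⟩
      · have e : k - (((p + 1 + 1) / 2 : ℕ) : ℤ)
            ≤ k + (((p + 2) % 2 : ℕ) : ℤ) - (((p + 1) / 2 : ℕ) : ℤ) := by omega
        exact le_trans (hx.monotone e) hl
      · have e : k + (((p + 2) % 2 : ℕ) : ℤ) + (((p + 2) / 2 : ℕ) : ℤ)
            = k + (((p + 1 + 2) / 2 : ℕ) : ℤ) := by omega
        rw [← e]; exact hr2

lemma exists_window {x : ℤ → ℝ} (hx : StrictMono x)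
    (htop : Filter.Tendsto x Filter.atTop Filter.atTop)
    (hbot : Filter.Tendsto x Filter.atBot Filter.atBot) (t : ℝ) :
    ∃ m : ℤ, x m ≤ t ∧ t < x (m + 1) := by
  obtain ⟨N, hN⟩ := Filter.eventually_atTop.mp (htop.eventually_gt_atTop t)
  obtain ⟨M, hM⟩ := Filter.eventually_atBot.mp (hbot.eventually_lt_atBot t)
  have hMN : M ≤ N := by
    by_contra hc
    exact absurd (hM N (by omega)).le (not_le.mpr (hN N le_rfl))
  set S : Finset ℤ := (Finset.Icc M N).filter (fun k => x k ≤ t) with hS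
  have hne : S.Nonempty := ⟨M, by simp [hS, Finset.mem_filter, Finset.mem_Icc, hMN, (hM M le_rfl).le]⟩
  refine ⟨S.max' hne, ?_, ?_⟩
  · have := S.max'_mem hne
    simp [hS, Finset.mem_filter] at this
    exact this.2
  · set m := S.max' hne with hm
    by_contra hc
    push_neg at hc
    have hmN : m + 1 < N := by
      have : x (m + 1) < x N := lt_of_le_of_lt hc (hN N le_rfl)
      exact hx.lt_iff_lt.mp this
    have hMm : M ≤ m := by
      have := S.max'_mem hne
      simp [hS, Finset.mem_filter, Finset.mem_Icc] at this
      exact this.1.1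
    have : m + 1 ∈ S := by
      simp [hS, Finset.mem_filter, Finset.mem_Icc]
      exact ⟨⟨by omega, by omega⟩, hc⟩
    have := S.le_max' _ this
    omega

lemma support_mul_bspline_finite {x : ℤ → ℝ} (hx : StrictMono x) {t : ℝ} {m : ℤ}
    (h1 : x m ≤ t) (h2 : t < x (m + 1)) (p : ℕ) (f : ℤ → ℝ) (g : ℤ → ℤ)
    (hg : ∀ k, f k ≠ 0 → Bspline x (p + 1) (g k) t ≠ 0)
    (hglin : ∀ k, g k - g 0 = k) :
    (Function.support f).Finite := by
  apply Set.Finite.subset (Set.finite_Icc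
    (m + 1 - (((p + 2) / 2 : ℕ) : ℤ) - g 0) (m + (((p + 1) / 2 : ℕ) : ℤ) - g 0))
  intro k hk
  obtain ⟨hl, hr⟩ := Bspline_support hx t p (g k) (hg k hk)
  have c1 : m < g k + (((p + 2) / 2 : ℕ) : ℤ) := hx.lt_iff_lt.mp (lt_of_le_of_lt h1 hr)
  have c2 : g k - (((p + 1) / 2 : ℕ) : ℤ) < m + 1 := hx.lt_iff_lt.mp (lt_of_le_of_lt hl h2)
  have c3 := hglin k
  simp only [Set.mem_Icc]
  omega

lemma support_subset_window {x : ℤ → ℝ} (hx : StrictMono x) {t : ℝ} {m : ℤ}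
    (h1 : x m ≤ t) (h2 : t < x (m + 1)) (p : ℕ) (c : ℤ → ℝ) :
    (Function.support fun k => c k * Bspline x (p + 1) k t) ⊆
      ↑(Finset.Icc (m + 1 - (((p + 2) / 2 : ℕ) : ℤ)) (m + (((p + 1) / 2 : ℕ) : ℤ))) := by
  intro k hk
  have hb : Bspline x (p + 1) k t ≠ 0 := right_ne_zero_of_mul hk
  obtain ⟨hl, hr⟩ := Bspline_support hx t p k hb
  have c1 : m < k + (((p + 2) / 2 : ℕ) : ℤ) := hx.lt_iff_lt.mp (lt_of_le_of_lt h1 hr)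
  have c2 : k - (((p + 1) / 2 : ℕ) : ℤ) < m + 1 := hx.lt_iff_lt.mp (lt_of_le_of_lt hl h2)
  simp only [Finset.coe_Icc, Set.mem_Icc]
  omega

lemma bracket (x : ℤ → ℝ) (hx : StrictMono x) (s t BJ : ℝ) {a b : ℤ} (hab : a ≤ b) :
    ((∏ i ∈ Finset.Icc a b, (s - x i)) * ((t - x (a - 1)) / (x b - x (a - 1)))) * BJ +
      ((∏ i ∈ Finset.Icc (a - 1) (b - 1), (s - x i)) * ((x b - t) / (x b - x (a - 1)))) * BJ
    = (s - t) * ((∏ i ∈ Finset.Icc a (b - 1), (s - x i)) * BJ) := by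
  have e1 : Finset.Icc a b = insert b (Finset.Icc a (b - 1)) := by
    ext i; simp only [Finset.mem_Icc, Finset.mem_insert]; omega
  have e2 : Finset.Icc (a - 1) (b - 1) = insert (a - 1) (Finset.Icc a (b - 1)) := by
    ext i; simp only [Finset.mem_Icc, Finset.mem_insert]; omega
  have hbm : b ∉ Finset.Icc a (b - 1) := by simp only [Finset.mem_Icc]; omega
  have ham : a - 1 ∉ Finset.Icc a (b - 1) := by simp only [Finset.mem_Icc]; omega
  rw [e1, e2, Finset.prod_insert hbm, Finset.prod_insert ham]
  have hD : x b - x (a - 1) ≠ 0 := sub_ne_zero.mpr (ne_of_gt (hx (by omega)))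
  field_simp
  ring

lemma marsden {x : ℤ → ℝ} (hx : StrictMono x) {t : ℝ} {m : ℤ}
    (h1 : x m ≤ t) (h2 : t < x (m + 1)) :
    ∀ p : ℕ, ∀ s : ℝ,
      ∑ᶠ k : ℤ, psiR x (p + 1) k s * Bspline x (p + 1) k t = (s - t) ^ p := by
  intro p
  induction p with
  | zero =>
    intro s
    have h0 : ∀ k : ℤ, psiR x 1 k s = 1 := by
      intro k
      unfold psiR
      rw [Finset.Icc_eq_empty (by omega), Finset.prod_empty]
    have hz : ∀ k : ℤ, k ≠ m → psiR x 1 k s * Bspline x 1 k t = 0 := by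
      intro k hk
      rw [h0, one_mul]
      simp only [Bspline]
      rw [if_neg]
      rintro ⟨ha, hb⟩
      have c1 : k < m + 1 := hx.lt_iff_lt.mp (lt_of_le_of_lt ha h2)
      have c2 : m < k + 1 := hx.lt_iff_lt.mp (lt_of_le_of_lt h1 hb)
      omega
    rw [finsum_eq_single _ m hz, h0, one_mul, pow_zero]
    simp only [Bspline]
    exact if_pos ⟨h1, h2⟩
  | succ p ih =>
    intro s
    set f : ℤ → ℝ := fun k =>
      (psiR x (p + 2) k s * ((t - x (k - ((p + 2) / 2 : ℕ))) /
          (x (k + ((p + 3) / 2 : ℕ) - 1) - x (k - ((p + 2) / 2 : ℕ))))) *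
        Bspline x (p + 1) (k - 1 + ((p + 2) % 2 : ℕ)) t with hf
    set g : ℤ → ℝ := fun k =>
      (psiR x (p + 2) k s * ((x (k + ((p + 3) / 2 : ℕ)) - t) /
          (x (k + ((p + 3) / 2 : ℕ)) - x (k - ((p + 2) / 2 : ℕ) + 1)))) *
        Bspline x (p + 1) (k + ((p + 2) % 2 : ℕ)) t with hg
    have hfin_f : (Function.support f).Finite := by
      apply support_mul_bspline_finite hx h1 h2 p f (fun k => k - 1 + ((p + 2) % 2 : ℕ))
      · intro k hk
        exact right_ne_zero_of_mul hk
      · intro k; omega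
    have hfin_g : (Function.support g).Finite := by
      apply support_mul_bspline_finite hx h1 h2 p g (fun k => k + ((p + 2) % 2 : ℕ))
      · intro k hk
        exact right_ne_zero_of_mul hk
      · intro k; omega
    have step1 : ∑ᶠ k : ℤ, psiR x (p + 1 + 1) k s * Bspline x (p + 1 + 1) k t
        = ∑ᶠ k : ℤ, (f k + g k) := by
      apply finsum_congr
      intro k
      rw [show p + 1 + 1 = p + 2 by omega, Bspline, hf, hg]
      ring
    -- reindexed versions
    set f' : ℤ → ℝ := fun j => f (j + (1 - (((p + 2) % 2 : ℕ) : ℤ))) with hf'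
    set g' : ℤ → ℝ := fun j => g (j - (((p + 2) % 2 : ℕ) : ℤ)) with hg'
    have hfin_f' : (Function.support f').Finite := by
      apply support_mul_bspline_finite hx h1 h2 p f'
        (fun j => (j + (1 - (((p + 2) % 2 : ℕ) : ℤ))) - 1 + ((p + 2) % 2 : ℕ))
      · intro k hk
        exact right_ne_zero_of_mul hk
      · intro k; omega
    have hfin_g' : (Function.support g').Finite := by
      apply support_mul_bspline_finite hx h1 h2 p g'
        (fun j => (j - (((p + 2) % 2 : ℕ) : ℤ)) + ((p + 2) % 2 : ℕ))
      · intro k hk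
        exact right_ne_zero_of_mul hk
      · intro k; omega
    have step2 : ∑ᶠ k : ℤ, (f k + g k) = ∑ᶠ j : ℤ, (f' j + g' j) := by
      rw [finsum_add_distrib hfin_f hfin_g, finsum_add_distrib hfin_f' hfin_g']
      congr 1
      · exact (finsum_comp_equiv (Equiv.addRight (1 - (((p + 2) % 2 : ℕ) : ℤ)))).symm
      · exact (finsum_comp_equiv (Equiv.subRight (((p + 2) % 2 : ℕ) : ℤ))).symm
    have key : ∀ j : ℤ, f' j + g' j
        = (s - t) * (psiR x (p + 1) j s * Bspline x (p + 1) j t) := by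
      intro j
      simp only [hf', hg', hf, hg, psiR]
      have hab : j + 1 - (((p + 1) / 2 : ℕ) : ℤ) ≤ j + (((p + 2) / 2 : ℕ) : ℤ) := by omega
      have H := bracket x hx s t (Bspline x (p + 1) j t) hab
      convert H using 5 <;>
        first
          | rfl
          | omega
          | (congr 1 <;> omega)
          | (congr 1 <;> first | rfl | omega | (congr 1 <;> omega))
          | (ext i; simp only [Finset.mem_Icc]; omega)
    have hfin_pb : (Function.support fun j : ℤ =>
        psiR x (p + 1) j s * Bspline x (p + 1) j t).Finite := by
      apply support_mul_bspline_finite hx h1 h2 p _ (fun k => k)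
      · intro k hk
        exact right_ne_zero_of_mul hk
      · intro k; omega
    rw [step1, step2, finsum_congr key, ← mul_finsum _ _, ih s]
    ring

open Polynomial in
/-- reproduction of power functions: for `p ≥ 2` and
`0 ≤ q ≤ p-1`, the power function `t^q` decomposes in the B-spline basis of
order `p` with the power coefficients `x̃_k^{[p,q]}`, the sum having only
finitely many nonzero terms. -/
theorem bspline_reproduces_powers
    (x : ℤ → ℝ) (hx : StrictMono x)
    (htop : Filter.Tendsto x Filter.atTop Filter.atTop)
    (hbot : Filter.Tendsto x Filter.atBot Filter.atBot)
    (p : ℕ) (hp : 2 ≤ p) (q : ℕ) (hq : q ≤ p - 1) (t : ℝ) :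
    {k : ℤ | powerCoef x p q k * Bspline x p k t ≠ 0}.Finite ∧
    t ^ q = ∑ᶠ k : ℤ, powerCoef x p q k * Bspline x p k t := by
  obtain ⟨n, rfl⟩ : ∃ n, p = n + 1 := ⟨p - 1, by omega⟩
  have hqn : q ≤ n := by omega
  obtain ⟨m, h1, h2⟩ := exists_window hx htop hbot t
  have hfin : (Function.support fun k : ℤ =>
      powerCoef x (n + 1) q k * Bspline x (n + 1) k t).Finite := by
    apply support_mul_bspline_finite hx h1 h2 n _ (fun k => k)
    · intro k hk; exact right_ne_zero_of_mul hk
    · intro k; omega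
  refine ⟨hfin, ?_⟩
  -- the window Finset
  set F : Finset ℤ :=
    Finset.Icc (m + 1 - (((n + 2) / 2 : ℕ) : ℤ)) (m + (((n + 1) / 2 : ℕ) : ℤ)) with hF
  -- the index sets
  set S : ℤ → Finset ℤ := fun k =>
    Finset.Icc (k + 1 - (((n + 1) / 2 : ℕ) : ℤ)) (k + (((n + 1 + 1) / 2 : ℕ) : ℤ) - 1) with hS
  have hcard : ∀ k, Multiset.card ((S k).val.map x) = n := by
    intro k
    rw [Multiset.card_map, Finset.card_val, hS]
    rw [Int.card_Icc]
    omega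
  -- polynomial identity
  set P1 : Polynomial ℝ :=
    ∑ k ∈ F, C (Bspline x (n + 1) k t) * ∏ i ∈ S k, (X - C (x i)) with hP1
  have heval : ∀ s : ℝ, P1.eval s = (s - t) ^ n := by
    intro s
    rw [← marsden hx h1 h2 n s,
      finsum_eq_finset_sum_of_support_subset _
        (support_subset_window hx h1 h2 n (fun k => psiR x (n + 1) k s))]
    rw [hP1, eval_finset_sum]
    apply Finset.sum_congr rfl
    intro k _
    rw [eval_mul, eval_C, eval_prod]
    simp only [eval_sub, eval_X, eval_C]
    rw [mul_comm]
    rfl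
  have hP : P1 = (X - C t) ^ n := by
    apply Polynomial.funext
    intro s
    rw [heval s]
    simp [eval_pow]
  have hco := congrArg (fun P : Polynomial ℝ => P.coeff (n - q)) hP
  rw [hP1, Polynomial.finset_sum_coeff] at hco
  have hterm : ∀ k ∈ F, (C (Bspline x (n + 1) k t) * ∏ i ∈ S k, (X - C (x i))).coeff (n - q)
      = Bspline x (n + 1) k t * ((-1) ^ q * ((S k).val.map x).esymm q) := by
    intro k _
    rw [Polynomial.coeff_C_mul]
    congr 1
    have hmm : Multiset.map (fun i => X - C (x i)) (S k).val
        = Multiset.map (fun r => X - C r) (Multiset.map x (S k).val) := by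
      rw [Multiset.map_map]; rfl
    rw [Finset.prod_eq_multiset_prod, hmm,
      Multiset.prod_X_sub_C_coeff _ (by rw [hcard]; omega), hcard,
      show n - (n - q) = q by omega]
  rw [Finset.sum_congr rfl hterm] at hco
  have hrhs : ((X - C t) ^ n).coeff (n - q) = (-1) ^ q * (t ^ q * (n.choose q : ℝ)) := by
    rw [show (X - C t) = (X + C (-t)) by rw [map_neg, sub_eq_add_neg],
      Polynomial.coeff_X_add_C_pow, show n - (n - q) = q by omega,
      Nat.choose_symm hqn, neg_pow]
    ring
  rw [hrhs] at hco
  have hco2 : ∑ k ∈ F, ((S k).val.map x).esymm q * Bspline x (n + 1) k t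
      = t ^ q * (n.choose q : ℝ) := by
    apply mul_left_cancel₀ (pow_ne_zero q (neg_ne_zero.mpr (one_ne_zero (α := ℝ))))
    rw [← hco, Finset.mul_sum]
    apply Finset.sum_congr rfl
    intro k _
    ring
  have hchoose : ((n.choose q : ℝ)) ≠ 0 := by
    exact_mod_cast (Nat.choose_pos hqn).ne'
  rw [finsum_eq_finset_sum_of_support_subset _
    (support_subset_window hx h1 h2 n (powerCoef x (n + 1) q))]
  have : ∀ k ∈ F, powerCoef x (n + 1) q k * Bspline x (n + 1) k t
      = (((S k).val.map x).esymm q * Bspline x (n + 1) k t) / (n.choose q : ℝ) := by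
    intro k _
    rw [powerCoef, show n + 1 - 1 = n by omega, hS]
    ring
  rw [Finset.sum_congr rfl this, ← Finset.sum_div, hco2]
  field_simp
end

section
/- Recursion for the power coefficients: for every integer p ≥ 2, every q ∈ {1, …, p−1} and every k ∈ ℤ, the power coefficients satisfy x̃_k^{[p,q]} = x̃_{k−1}^{[p,q]} + (q/(p−1)) · x̃_{k−r'}^{[p−1,q−1]} · (x_{k+⌈p/2⌉−1} − x_{k−⌊p/2⌋}), where r' = 1 − (p − 2⌊p/2⌋). -/
lemma esymm_cons_aux (a : ℝ) (s : Multiset ℝ) (n : ℕ) :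
    (a ::ₘ s).esymm (n + 1) = s.esymm (n + 1) + a * s.esymm n := by
  simp only [Multiset.esymm, Multiset.powersetCard_cons, Multiset.map_add, Multiset.sum_add,
    Multiset.map_map, Function.comp_def, Multiset.prod_cons]
  rw [Multiset.sum_map_mul_left]

lemma Icc_val_cons_right (lo hi : ℤ) (h : lo ≤ hi) :
    (Finset.Icc lo hi).val = hi ::ₘ (Finset.Icc lo (hi - 1)).val := by
  have h1 : Finset.Icc lo hi = insert hi (Finset.Icc lo (hi - 1)) := by
    ext a; simp only [Finset.mem_Icc, Finset.mem_insert]; omega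
  rw [h1, Finset.insert_val_of_notMem (by simp)]

lemma Icc_val_cons_left (lo hi : ℤ) (h : lo - 1 ≤ hi) :
    (Finset.Icc (lo - 1) hi).val = (lo - 1) ::ₘ (Finset.Icc lo hi).val := by
  have h1 : Finset.Icc (lo - 1) hi = insert (lo - 1) (Finset.Icc lo hi) := by
    ext a; simp only [Finset.mem_Icc, Finset.mem_insert]; omega
  rw [h1, Finset.insert_val_of_notMem (by simp)]

/-- recursion for the power coefficients: for `p ≥ 2` and
`1 ≤ q ≤ p-1`,
`x̃_k^{[p,q]} = x̃_{k-1}^{[p,q]} + (q/(p-1)) x̃_{k-r'}^{[p-1,q-1]} (x_{k+⌈p/2⌉-1} - x_{k-⌊p/2⌋})`,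
where `r' = 1 - (p % 2)`. -/
theorem powerCoef_recursion
    (x : ℤ → ℝ) (hx : StrictMono x) (p : ℕ) (hp : 2 ≤ p)
    (q : ℕ) (hq1 : 1 ≤ q) (hq2 : q ≤ p - 1) (k : ℤ) :
    powerCoef x p q k = powerCoef x p q (k - 1) +
      ((q : ℝ) / ((p : ℝ) - 1)) *
        powerCoef x (p - 1) (q - 1) (k - (1 - ((p % 2 : ℕ) : ℤ))) *
        (x (k + ((p + 1) / 2 : ℕ) - 1) - x (k - (p / 2 : ℕ))) := by
  obtain ⟨q, rfl⟩ : ∃ q', q = q' + 1 := ⟨q - 1, by omega⟩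
  set lo : ℤ := k + 1 - (p / 2 : ℕ) with hlo
  set hi : ℤ := k + ((p + 1) / 2 : ℕ) - 1 with hhi
  have hle : lo ≤ hi := by rw [hlo, hhi]; omega
  set M : Multiset ℝ := (Finset.Icc lo (hi - 1)).val.map x with hM
  -- window for (p, k)
  have hS : ((Finset.Icc lo hi).val.map x) = x hi ::ₘ M := by
    rw [Icc_val_cons_right lo hi hle, Multiset.map_cons]
  -- window for (p, k-1)
  have hS' : ((Finset.Icc (k - 1 + 1 - (p / 2 : ℕ)) (k - 1 + ((p + 1) / 2 : ℕ) - 1)).val.map x)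
      = x (lo - 1) ::ₘ M := by
    have e1 : k - 1 + 1 - (p / 2 : ℕ) = lo - 1 := by rw [hlo]; ring
    have e2 : k - 1 + ((p + 1) / 2 : ℕ) - 1 = hi - 1 := by rw [hhi]; ring
    rw [e1, e2, Icc_val_cons_left lo (hi - 1) (by omega : lo - 1 ≤ hi - 1), Multiset.map_cons]
  -- window for (p-1, k')
  have hSm : (Finset.Icc (k - (1 - ((p % 2 : ℕ) : ℤ)) + 1 - ((p - 1) / 2 : ℕ))
      (k - (1 - ((p % 2 : ℕ) : ℤ)) + (((p - 1) + 1) / 2 : ℕ) - 1)).val.map x = M := by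
    have e1 : k - (1 - ((p % 2 : ℕ) : ℤ)) + 1 - ((p - 1) / 2 : ℕ) = lo := by
      rw [hlo]; omega
    have e2 : k - (1 - ((p % 2 : ℕ) : ℤ)) + (((p - 1) + 1) / 2 : ℕ) - 1 = hi - 1 := by
      rw [hhi, show p - 1 + 1 = p by omega]; omega
    rw [e1, e2]
  simp only [powerCoef, hS, hS', hSm, esymm_cons_aux]
  rw [← hlo, ← hhi, hS, esymm_cons_aux]
  have hx2 : k - (p / 2 : ℕ) = lo - 1 := by rw [hlo]; ring
  rw [hx2]
  -- binomial identity
  have hc : ((p - 1 : ℕ) : ℝ) = (p : ℝ) - 1 := by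
    rw [Nat.cast_sub (by omega : 1 ≤ p)]; norm_num
  have h1 : (p - 1) * Nat.choose (p - 1 - 1) q = Nat.choose (p - 1) (q + 1) * (q + 1) := by
    have h := Nat.add_one_mul_choose_eq (p - 1 - 1) q
    rw [show p - 1 - 1 + 1 = p - 1 by omega] at h
    simpa [Nat.succ_eq_add_one] using h
  have hid : ((p : ℝ) - 1) * ((p - 1 - 1).choose q : ℝ)
      = ((q + 1 : ℕ) : ℝ) * ((p - 1).choose (q + 1) : ℝ) := by
    rw [← hc]
    exact_mod_cast h1.trans (Nat.mul_comm _ _)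
  have hC1 : (((p - 1).choose (q + 1) : ℕ) : ℝ) ≠ 0 :=
    Nat.cast_ne_zero.mpr (Nat.choose_pos (by omega)).ne'
  have hC2 : (((p - 1 - 1).choose q : ℕ) : ℝ) ≠ 0 :=
    Nat.cast_ne_zero.mpr (Nat.choose_pos (by omega)).ne'
  have hp1 : (p : ℝ) - 1 ≠ 0 := by
    have : (2 : ℝ) ≤ (p : ℝ) := by exact_mod_cast hp
    linarith
  have hq0 : ((q + 1 : ℕ) : ℝ) ≠ 0 := Nat.cast_ne_zero.mpr (by omega)
  have key : ((q + 1 : ℕ) : ℝ) / ((p : ℝ) - 1) * (M.esymm q / ((p - 1 - 1).choose q : ℝ))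
      = M.esymm q / ((p - 1).choose (q + 1) : ℝ) := by
    rw [div_mul_div_comm, hid, mul_div_mul_left _ _ hq0]
  simp only [Nat.add_sub_cancel]
  rw [key]
  field_simp
  ring
end

section
/- Existence and band structure of the B-spline refinement: let p ≥ 1, let y : ℤ → ℝ be a strictly increasing sequence of fine-scale knots, and let the coarse-scale knots be x_k = y_{2k} (two-nested grids). Denote by φ_k^[p] the B-splines on the coarse knots x and by ψ_ℓ^[p] the B-splines on the fine knots y. Then for every k ∈ ℤ there exist unique real coefficients H_{ℓ,k}, defined for ℓ ∈ ℤ and vanishing unless 2k−⌊p/2⌋ ≤ ℓ ≤ 2k+⌈p/2⌉, such that φ_k^[p](t) = Σ_ℓ H_{ℓ,k} ψ_ℓ^[p](t) for every t ∈ ℝ. In particular, each column of the refinement matrix has at most p+1 nonzero entries. -/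
lemma Bspline_one (z : ℤ → ℝ) (k : ℤ) (t : ℝ) :
    Bspline z 1 k t = if z k ≤ t ∧ t < z (k + 1) then 1 else 0 := rfl

lemma Bspline_rec (z : ℤ → ℝ) (p : ℕ) (k : ℤ) (t : ℝ) :
    Bspline z (p + 2) k t =
      ((t - z (k - ((p + 2) / 2 : ℕ))) /
          (z (k + ((p + 3) / 2 : ℕ) - 1) - z (k - ((p + 2) / 2 : ℕ)))) *
        Bspline z (p + 1) (k - 1 + ((p + 2) % 2 : ℕ)) t +
      ((z (k + ((p + 3) / 2 : ℕ)) - t) /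
          (z (k + ((p + 3) / 2 : ℕ)) - z (k - ((p + 2) / 2 : ℕ) + 1))) *
        Bspline z (p + 1) (k + ((p + 2) % 2 : ℕ)) t := rfl

/-- locality: the B-spline only depends on the knots in its window. -/
lemma Bspline_congr (q : ℕ) : ∀ (z w : ℤ → ℝ) (k : ℤ),
    (∀ i : ℤ, k - ((q / 2 : ℕ) : ℤ) ≤ i → i ≤ k + (((q + 1) / 2 : ℕ) : ℤ) → z i = w i) →
    ∀ t : ℝ, Bspline z q k t = Bspline w q k t := by
  induction q with
  | zero => intro z w k h t; rfl
  | succ n ih =>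
    rcases n with _ | m
    · intro z w k h t
      rw [Bspline_one, Bspline_one, h k (by norm_num) (by norm_num),
        h (k+1) (by norm_num) (by norm_num)]
    · intro z w k h t
      rw [Bspline_rec, Bspline_rec,
        h _ (by omega) (by omega), h _ (by omega) (by omega), h _ (by omega) (by omega),
        h _ (by omega) (by omega),
        ih z w _ (fun i h1 h2 => h i (by omega) (by omega)) t,
        ih z w _ (fun i h1 h2 => h i (by omega) (by omega)) t]

/-- shift invariance. -/
lemma Bspline_shift (q : ℕ) : ∀ (z : ℤ → ℝ) (s k : ℤ) (t : ℝ),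
    Bspline (fun i => z (i + s)) q k t = Bspline z q (k + s) t := by
  induction q with
  | zero => intro z s k t; rfl
  | succ n ih =>
    rcases n with _ | m
    · intro z s k t
      rw [Bspline_one, Bspline_one, show k + s + 1 = k + 1 + s by ring]
    · intro z s k t
      rw [Bspline_rec, Bspline_rec, ih z s _ t, ih z s _ t]
      rw [show k - ((m+2)/2 : ℕ) + s = k + s - ((m+2)/2 : ℕ) by ring,
        show k + ((m+3)/2 : ℕ) - 1 + s = k + s + ((m+3)/2 : ℕ) - 1 by ring,
        show k + ((m+3)/2 : ℕ) + s = k + s + ((m+3)/2 : ℕ) by ring,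
        show k - ((m+2)/2 : ℕ) + 1 + s = k + s - ((m+2)/2 : ℕ) + 1 by ring,
        show k - 1 + ((m+2)%2 : ℕ) + s = k + s - 1 + ((m+2)%2 : ℕ) by ring,
        show k + ((m+2)%2 : ℕ) + s = k + s + ((m+2)%2 : ℕ) by ring]

/-- vanishing to the left of the support window. -/
lemma Bspline_zero_left (q : ℕ) : ∀ (z : ℤ → ℝ), Monotone z → ∀ (k : ℤ) (t : ℝ),
    t < z (k - ((q / 2 : ℕ) : ℤ)) → Bspline z q k t = 0 := by
  induction q with
  | zero => intro z hz k t ht; rfl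
  | succ n ih =>
    rcases n with _ | m
    · intro z hz k t ht
      rw [Bspline_one, if_neg]
      rintro ⟨h1, h2⟩
      norm_num at ht
      linarith
    · intro z hz k t ht
      rw [Bspline_rec,
        ih z hz (k - 1 + ((m+2)%2 : ℕ)) t
          (lt_of_lt_of_le ht (hz (by omega))),
        ih z hz (k + ((m+2)%2 : ℕ)) t
          (lt_of_lt_of_le ht (hz (by omega)))]
      ring

/-- vanishing to the right of the support window. -/
lemma Bspline_zero_right (q : ℕ) : ∀ (z : ℤ → ℝ), Monotone z → ∀ (k : ℤ) (t : ℝ),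
    z (k + (((q + 1) / 2 : ℕ) : ℤ)) ≤ t → Bspline z q k t = 0 := by
  induction q with
  | zero => intro z hz k t ht; rfl
  | succ n ih =>
    rcases n with _ | m
    · intro z hz k t ht
      rw [Bspline_one, if_neg]
      rintro ⟨h1, h2⟩
      norm_num at ht
      linarith
    · intro z hz k t ht
      rw [Bspline_rec,
        ih z hz (k - 1 + ((m+2)%2 : ℕ)) t
          (le_trans (hz (by omega)) ht),
        ih z hz (k + ((m+2)%2 : ℕ)) t
          (le_trans (hz (by omega)) ht)]
      ring

/-- nonnegativity. -/
lemma Bspline_nonneg (q : ℕ) : ∀ (z : ℤ → ℝ), StrictMono z → ∀ (k : ℤ) (t : ℝ),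
    0 ≤ Bspline z q k t := by
  induction q with
  | zero => intro z hz k t; exact le_refl 0
  | succ n ih =>
    rcases n with _ | m
    · intro z hz k t
      rw [Bspline_one]
      split_ifs <;> norm_num
    · intro z hz k t
      rw [Bspline_rec]
      have d1 : (0:ℝ) < z (k + ((m+3)/2 : ℕ) - 1) - z (k - ((m+2)/2 : ℕ)) :=
        sub_pos.mpr (hz (by omega))
      have d2 : (0:ℝ) < z (k + ((m+3)/2 : ℕ)) - z (k - ((m+2)/2 : ℕ) + 1) :=
        sub_pos.mpr (hz (by omega))
      have T1 : 0 ≤ (t - z (k - ((m + 2) / 2 : ℕ))) /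
          (z (k + ((m + 3) / 2 : ℕ) - 1) - z (k - ((m + 2) / 2 : ℕ))) *
          Bspline z (m + 1) (k - 1 + ((m + 2) % 2 : ℕ)) t := by
        by_cases hN : Bspline z (m + 1) (k - 1 + ((m + 2) % 2 : ℕ)) t = 0
        · rw [hN]; ring_nf; exact le_refl 0
        · have hts : ¬ t < z ((k - 1 + ((m+2)%2 : ℕ)) - (((m+1)/2 : ℕ) : ℤ)) := by
            intro hc
            exact hN (Bspline_zero_left (m+1) z hz.monotone _ t hc)
          push_neg at hts
          have hlo : ((k - 1 + ((m+2)%2 : ℕ)) - (((m+1)/2 : ℕ) : ℤ)) = k - ((m+2)/2 : ℕ) := by omega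
          rw [hlo] at hts
          exact mul_nonneg (div_nonneg (by linarith) (le_of_lt d1)) (ih z hz _ t)
      have T2 : 0 ≤ (z (k + ((m + 3) / 2 : ℕ)) - t) /
          (z (k + ((m + 3) / 2 : ℕ)) - z (k - ((m + 2) / 2 : ℕ) + 1)) *
          Bspline z (m + 1) (k + ((m + 2) % 2 : ℕ)) t := by
        by_cases hN : Bspline z (m + 1) (k + ((m + 2) % 2 : ℕ)) t = 0
        · rw [hN]; ring_nf; exact le_refl 0
        · have hts : ¬ z ((k + ((m+2)%2 : ℕ)) + (((m+2)/2 : ℕ) : ℤ)) ≤ t := by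
            intro hc
            exact hN (Bspline_zero_right (m+1) z hz.monotone _ t hc)
          push_neg at hts
          have hhi : ((k + ((m+2)%2 : ℕ)) + (((m+2)/2 : ℕ) : ℤ)) = k + ((m+3)/2 : ℕ) := by omega
          rw [hhi] at hts
          exact mul_nonneg (div_nonneg (by linarith) (le_of_lt d2)) (ih z hz _ t)
      linarith

/-- positivity on the first knot interval of the support. -/
lemma Bspline_pos (q : ℕ) (hq : 1 ≤ q) : ∀ (z : ℤ → ℝ), StrictMono z → ∀ (k : ℤ) (t : ℝ),
    z (k - ((q / 2 : ℕ) : ℤ)) < t → t < z (k - ((q / 2 : ℕ) : ℤ) + 1) →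
    0 < Bspline z q k t := by
  induction q with
  | zero => omega
  | succ n ih =>
    rcases n with _ | m
    · intro z hz k t h1 h2
      rw [Bspline_one, if_pos]
      · norm_num
      constructor
      · norm_num at h1 ⊢; linarith
      · norm_num at h2 ⊢; linarith
    · intro z hz k t h1 h2
      rw [Bspline_rec]
      have d1 : (0:ℝ) < z (k + ((m+3)/2 : ℕ) - 1) - z (k - ((m+2)/2 : ℕ)) :=
        sub_pos.mpr (hz (by omega))
      have d2 : (0:ℝ) < z (k + ((m+3)/2 : ℕ)) - z (k - ((m+2)/2 : ℕ) + 1) :=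
        sub_pos.mpr (hz (by omega))
      have hsub1 : 0 < Bspline z (m + 1) (k - 1 + ((m + 2) % 2 : ℕ)) t := by
        apply ih (by omega) z hz _ t
        · rw [show ((k - 1 + ((m+2)%2 : ℕ)) - (((m+1)/2 : ℕ) : ℤ)) = k - ((m+2)/2 : ℕ) by omega]
          exact h1
        · rw [show ((k - 1 + ((m+2)%2 : ℕ)) - (((m+1)/2 : ℕ) : ℤ) + 1) = k - ((m+2)/2 : ℕ) + 1 by omega]
          exact h2
      have T1 : 0 < (t - z (k - ((m + 2) / 2 : ℕ))) /
          (z (k + ((m + 3) / 2 : ℕ) - 1) - z (k - ((m + 2) / 2 : ℕ))) *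
          Bspline z (m + 1) (k - 1 + ((m + 2) % 2 : ℕ)) t :=
        mul_pos (div_pos (by linarith) d1) hsub1
      have T2 : 0 ≤ (z (k + ((m + 3) / 2 : ℕ)) - t) /
          (z (k + ((m + 3) / 2 : ℕ)) - z (k - ((m + 2) / 2 : ℕ) + 1)) *
          Bspline z (m + 1) (k + ((m + 2) % 2 : ℕ)) t := by
        have : t < z (k + ((m+3)/2 : ℕ)) :=
          lt_of_lt_of_le h2 (hz.monotone (by omega))
        exact mul_nonneg (div_nonneg (by linarith) (le_of_lt d2)) (Bspline_nonneg (m+1) z hz _ t)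
      linarith

/-- the knot sequence obtained by inserting the value `u` at position `j`. -/
noncomputable def insKnot (z : ℤ → ℝ) (j : ℤ) (u : ℝ) : ℤ → ℝ :=
  fun i => if i < j then z i else if i = j then u else z (i - 1)

lemma insKnot_lt (z : ℤ → ℝ) (j : ℤ) (u : ℝ) {i : ℤ} (h : i < j) : insKnot z j u i = z i := by
  simp [insKnot, h]

lemma insKnot_self (z : ℤ → ℝ) (j : ℤ) (u : ℝ) : insKnot z j u j = u := by
  simp [insKnot]

lemma insKnot_gt (z : ℤ → ℝ) (j : ℤ) (u : ℝ) {i m : ℤ} (h : j < i) (hm : m = i - 1) :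
    insKnot z j u i = z m := by
  subst hm
  simp only [insKnot]
  rw [if_neg (by omega : ¬ i < j), if_neg (by omega : ¬ i = j)]

lemma insKnot_strictMono {z : ℤ → ℝ} (hz : StrictMono z) {j : ℤ} {u : ℝ}
    (h1 : z (j - 1) < u) (h2 : u < z j) : StrictMono (insKnot z j u) := by
  apply strictMono_int_of_lt_succ
  intro i
  rcases lt_trichotomy (i+1) j with h | h | h
  · rw [insKnot_lt z j u (by omega), insKnot_lt z j u h]; exact hz (by omega)
  · rw [insKnot_lt z j u (by omega), h, insKnot_self]; rwa [show i = j - 1 by omega]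
  · rcases eq_or_lt_of_le (show j ≤ i by omega) with h' | h'
    · subst h'
      rw [insKnot_self, insKnot_gt z j u (i := j + 1) (m := j) (by omega) (by omega)]
      exact h2
    · rw [insKnot_gt z j u (i := i) (m := i - 1) h' rfl,
        insKnot_gt z j u (i := i + 1) (m := i) (by omega) (by omega)]
      exact hz (by omega)

/-- coefficient of `Bspline (insKnot z j u) q k` in the insertion formula. -/
noncomputable def ACoef (z : ℤ → ℝ) (j : ℤ) (u : ℝ) (q : ℕ) (k : ℤ) : ℝ :=
  if k + (((q + 1) / 2 : ℕ) : ℤ) ≤ j then 1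
  else (max (z (k - ((q / 2 : ℕ) : ℤ))) (min u (z (k + (((q + 1) / 2 : ℕ) : ℤ) - 1)))
      - z (k - ((q / 2 : ℕ) : ℤ))) /
    (z (k + (((q + 1) / 2 : ℕ) : ℤ) - 1) - z (k - ((q / 2 : ℕ) : ℤ)))

/-- coefficient of `Bspline (insKnot z j u) q (k+1)` in the insertion formula. -/
noncomputable def BCoef (z : ℤ → ℝ) (j : ℤ) (u : ℝ) (q : ℕ) (k : ℤ) : ℝ :=
  if j ≤ k - ((q / 2 : ℕ) : ℤ) + 1 then 1
  else (z (k + (((q + 1) / 2 : ℕ) : ℤ))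
      - max (z (k - ((q / 2 : ℕ) : ℤ) + 1)) (min u (z (k + (((q + 1) / 2 : ℕ) : ℤ))))) /
    (z (k + (((q + 1) / 2 : ℕ) : ℤ)) - z (k - ((q / 2 : ℕ) : ℤ) + 1))

lemma ACoef_one {z : ℤ → ℝ} {j : ℤ} {u : ℝ} {q : ℕ} {k : ℤ}
    (h : k + (((q + 1) / 2 : ℕ) : ℤ) ≤ j) : ACoef z j u q k = 1 := if_pos h

lemma ACoef_zero {z : ℤ → ℝ} {j : ℤ} {u : ℝ} {q : ℕ} {k : ℤ} (hz : Monotone z) (hq : 1 ≤ q)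
    (hj : ¬ k + (((q + 1) / 2 : ℕ) : ℤ) ≤ j) (hu : u ≤ z (k - ((q / 2 : ℕ) : ℤ))) :
    ACoef z j u q k = 0 := by
  rw [ACoef, if_neg hj, min_eq_left (le_trans hu (hz (by omega))),
    max_eq_left hu, sub_self, zero_div]

lemma ACoef_ratio {z : ℤ → ℝ} {j : ℤ} {u : ℝ} {q : ℕ} {k : ℤ} {lo hi : ℤ}
    (hlo : lo = k - ((q / 2 : ℕ) : ℤ)) (hhi : hi = k + (((q + 1) / 2 : ℕ) : ℤ))
    (hj : ¬ hi ≤ j) (h1 : z lo ≤ u) (h2 : u ≤ z (hi - 1)) :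
    ACoef z j u q k = (u - z lo) / (z (hi - 1) - z lo) := by
  subst hlo; subst hhi
  rw [ACoef, if_neg hj, min_eq_left h2, max_eq_right h1]

lemma BCoef_one {z : ℤ → ℝ} {j : ℤ} {u : ℝ} {q : ℕ} {k : ℤ}
    (h : j ≤ k - ((q / 2 : ℕ) : ℤ) + 1) : BCoef z j u q k = 1 := if_pos h

lemma BCoef_zero {z : ℤ → ℝ} {j : ℤ} {u : ℝ} {q : ℕ} {k : ℤ} (hz : Monotone z) (hq : 1 ≤ q)
    (hj : ¬ j ≤ k - ((q / 2 : ℕ) : ℤ) + 1) (hu : z (k + (((q + 1) / 2 : ℕ) : ℤ)) ≤ u) :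
    BCoef z j u q k = 0 := by
  rw [BCoef, if_neg hj, min_eq_right hu, max_eq_right (hz (by omega)), sub_self, zero_div]

lemma BCoef_ratio {z : ℤ → ℝ} {j : ℤ} {u : ℝ} {q : ℕ} {k : ℤ} {lo hi : ℤ}
    (hlo : lo = k - ((q / 2 : ℕ) : ℤ)) (hhi : hi = k + (((q + 1) / 2 : ℕ) : ℤ))
    (hj : ¬ j ≤ lo + 1) (h1 : z (lo + 1) ≤ u) (h2 : u ≤ z hi) :
    BCoef z j u q k = (z hi - u) / (z hi - z (lo + 1)) := by
  subst hlo; subst hhi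
  rw [BCoef, if_neg hj, min_eq_left h2, max_eq_right h1]


theorem boehm (z : ℤ → ℝ) (hz : StrictMono z) (j : ℤ) (u : ℝ)
    (hu1 : z (j - 1) < u) (hu2 : u < z j) :
    ∀ (p : ℕ) (k : ℤ) (t : ℝ),
      Bspline z (p + 1) k t =
        ACoef z j u (p + 1) k * Bspline (insKnot z j u) (p + 1) k t +
        BCoef z j u (p + 1) k * Bspline (insKnot z j u) (p + 1) (k + 1) t := by
  intro p
  induction p with
  | zero =>
    intro k t
    show Bspline z 1 k t =
      ACoef z j u 1 k * Bspline (insKnot z j u) 1 k t +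
      BCoef z j u 1 k * Bspline (insKnot z j u) 1 (k + 1) t
    rcases (by omega : j ≤ k ∨ j = k + 1 ∨ k + 2 ≤ j) with hj | hj | hj
    · have c1 : ACoef z j u 1 k = 0 :=
        ACoef_zero hz.monotone (by omega) (by omega)
          (le_of_lt (lt_of_lt_of_le hu2 (hz.monotone (by omega))))
      have c2 : BCoef z j u 1 k = 1 := BCoef_one (by omega)
      rw [c1, c2, Bspline_one, Bspline_one, Bspline_one,
        show insKnot z j u (k + 1) = z k from insKnot_gt z j u (by omega) (by omega),
        show insKnot z j u (k + 1 + 1) = z (k + 1) from insKnot_gt z j u (by omega) (by omega)]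
      ring
    · have c1 : ACoef z j u 1 k = 1 := ACoef_one (by omega)
      have c2 : BCoef z j u 1 k = 1 := BCoef_one (by omega)
      rw [c1, c2, Bspline_one, Bspline_one, Bspline_one,
        show insKnot z j u k = z k from insKnot_lt z j u (by omega),
        show insKnot z j u (k + 1) = u from by
          rw [show (k : ℤ) + 1 = j by omega]; exact insKnot_self z j u,
        show insKnot z j u (k + 1 + 1) = z (k + 1) from insKnot_gt z j u (by omega) (by omega)]
      have hzk : z k < u := by rw [show (k : ℤ) = j - 1 by omega]; exact hu1
      have hzk1 : u < z (k + 1) := by rw [show (k : ℤ) + 1 = j by omega]; exact hu2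
      rcases lt_or_ge t u with ht | ht
      · rw [if_neg (show ¬(u ≤ t ∧ t < z (k + 1)) from fun h => absurd h.1 (not_le.mpr ht))]
        by_cases hc : z k ≤ t
        · rw [if_pos ⟨hc, lt_trans ht hzk1⟩, if_pos ⟨hc, ht⟩]; ring
        · rw [if_neg (fun c => hc c.1), if_neg (fun c => hc c.1)]; ring
      · rw [if_neg (show ¬(z k ≤ t ∧ t < u) from fun h => absurd h.2 (not_lt.mpr ht))]
        by_cases hc : t < z (k + 1)
        · rw [if_pos ⟨le_trans (le_of_lt hzk) ht, hc⟩, if_pos ⟨ht, hc⟩]; ring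
        · rw [if_neg (fun c => hc c.2), if_neg (fun c => hc c.2)]; ring
    · have c1 : ACoef z j u 1 k = 1 := ACoef_one (by omega)
      have c2 : BCoef z j u 1 k = 0 :=
        BCoef_zero hz.monotone (by omega) (by omega)
          (le_of_lt (lt_of_le_of_lt (hz.monotone (by omega)) hu1))
      rw [c1, c2, Bspline_one, Bspline_one, Bspline_one,
        show insKnot z j u k = z k from insKnot_lt z j u (by omega),
        show insKnot z j u (k + 1) = z (k + 1) from insKnot_lt z j u (by omega)]
      ring
  | succ p IH =>
    intro k t
    set z' := insKnot z j u with hz'def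
    obtain ⟨L, hL⟩ : ∃ L : ℤ, L = k - (((p + 2) / 2 : ℕ) : ℤ) := ⟨_, rfl⟩
    obtain ⟨H, hH⟩ : ∃ H : ℤ, H = k + (((p + 3) / 2 : ℕ) : ℤ) := ⟨_, rfl⟩
    obtain ⟨R, hR⟩ : ∃ R : ℤ, R = (((p + 2) % 2 : ℕ) : ℤ) := ⟨_, rfl⟩
    have hwin : L + 2 ≤ H := by omega
    rw [show ((p : ℕ) + 1 + 1) = p + 2 from rfl]
    rw [Bspline_rec z p k t, Bspline_rec z' p k t, Bspline_rec z' p (k + 1) t]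
    rw [IH (k - 1 + ((p + 2) % 2 : ℕ)) t, IH (k + ((p + 2) % 2 : ℕ)) t]
    rw [← hL, ← hH, ← hR]
    rw [show (k + 1 + (((p + 3) / 2 : ℕ) : ℤ) - 1) = H by omega,
      show (k + 1 + (((p + 3) / 2 : ℕ) : ℤ)) = H + 1 by omega,
      show (k + 1 - (((p + 2) / 2 : ℕ) : ℤ) + 1) = L + 2 by omega,
      show (k + 1 - (((p + 2) / 2 : ℕ) : ℤ)) = L + 1 by omega,
      show (k - 1 + R + 1) = k + R by omega,
      show (k + 1 - 1 + R) = k + R by omega,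
      show (k + 1 + R) = k + R + 1 by omega]
    have nD1 : z (H - 1) - z L ≠ 0 := sub_ne_zero.mpr (ne_of_gt (hz (by omega)))
    have nD2 : z H - z (L + 1) ≠ 0 := sub_ne_zero.mpr (ne_of_gt (hz (by omega)))
    have E1 : (t - z L) / (z (H - 1) - z L) * ACoef z j u (p + 1) (k - 1 + R) =
        ACoef z j u (p + 2) k * ((t - z' L) / (z' (H - 1) - z' L)) := by
      rcases (by omega : j ≤ L ∨ (L < j ∧ j ≤ H - 2) ∨ j = H - 1 ∨ H ≤ j) with
        hj | ⟨hj1, hj2⟩ | hj | hj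
      · have c1 : ACoef z j u (p + 1) (k - 1 + R) = 0 :=
          ACoef_zero hz.monotone (by omega) (by omega)
            (le_of_lt (lt_of_lt_of_le hu2 (hz.monotone (by omega))))
        have c2 : ACoef z j u (p + 2) k = 0 :=
          ACoef_zero hz.monotone (by omega) (by omega)
            (le_of_lt (lt_of_lt_of_le hu2 (hz.monotone (by omega))))
        rw [c1, c2]; ring
      · have c1 : ACoef z j u (p + 1) (k - 1 + R) = (u - z L) / (z (H - 1 - 1) - z L) :=
          ACoef_ratio (lo := L) (hi := H - 1) (by omega) (by omega) (by omega)
            (le_of_lt (lt_of_le_of_lt (hz.monotone (by omega)) hu1))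
            (le_of_lt (lt_of_lt_of_le hu2 (hz.monotone (by omega))))
        have c2 : ACoef z j u (p + 2) k = (u - z L) / (z (H - 1) - z L) :=
          ACoef_ratio (lo := L) (hi := H) (by omega) (by omega) (by omega)
            (le_of_lt (lt_of_le_of_lt (hz.monotone (by omega)) hu1))
            (le_of_lt (lt_of_lt_of_le hu2 (hz.monotone (by omega))))
        rw [c1, c2, show z' L = z L from insKnot_lt z j u (by omega),
          show z' (H - 1) = z (H - 1 - 1) from insKnot_gt z j u (by omega) (by omega)]
        ring
      · have c1 : ACoef z j u (p + 1) (k - 1 + R) = 1 := ACoef_one (by omega)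
        have c2 : ACoef z j u (p + 2) k = (u - z L) / (z (H - 1) - z L) :=
          ACoef_ratio (lo := L) (hi := H) (by omega) (by omega) (by omega)
            (le_of_lt (lt_of_le_of_lt (hz.monotone (by omega)) hu1))
            (le_of_lt (lt_of_lt_of_le hu2 (hz.monotone (by omega))))
        rw [c1, c2, show z' L = z L from insKnot_lt z j u (by omega),
          show z' (H - 1) = u from by
            rw [show (H : ℤ) - 1 = j by omega]; exact insKnot_self z j u]
        have n2 : u - z L ≠ 0 :=
          sub_ne_zero.mpr (ne_of_gt (lt_of_le_of_lt (hz.monotone (by omega)) hu1))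
        field_simp
      · have c1 : ACoef z j u (p + 1) (k - 1 + R) = 1 := ACoef_one (by omega)
        have c2 : ACoef z j u (p + 2) k = 1 := ACoef_one (by omega)
        rw [c1, c2, show z' L = z L from insKnot_lt z j u (by omega),
          show z' (H - 1) = z (H - 1) from insKnot_lt z j u (by omega)]
        ring
    have E3 : (z H - t) / (z H - z (L + 1)) * BCoef z j u (p + 1) (k + R) =
        BCoef z j u (p + 2) k * ((z' (H + 1) - t) / (z' (H + 1) - z' (L + 2))) := by
      rcases (by omega : j ≤ L + 1 ∨ j = L + 2 ∨ (L + 2 < j ∧ j ≤ H) ∨ H < j) with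
        hj | hj | ⟨hj1, hj2⟩ | hj
      · have c1 : BCoef z j u (p + 1) (k + R) = 1 := BCoef_one (by omega)
        have c2 : BCoef z j u (p + 2) k = 1 := BCoef_one (by omega)
        rw [c1, c2, show z' (H + 1) = z H from insKnot_gt z j u (by omega) (by omega),
          show z' (L + 2) = z (L + 1) from insKnot_gt z j u (by omega) (by omega)]
        ring
      · have c1 : BCoef z j u (p + 1) (k + R) = 1 := BCoef_one (by omega)
        have c2 : BCoef z j u (p + 2) k = (z H - u) / (z H - z (L + 1)) :=
          BCoef_ratio (lo := L) (hi := H) (by omega) (by omega) (by omega)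
            (le_of_lt (lt_of_le_of_lt (hz.monotone (by omega)) hu1))
            (le_of_lt (lt_of_lt_of_le hu2 (hz.monotone (by omega))))
        rw [c1, c2, show z' (H + 1) = z H from insKnot_gt z j u (by omega) (by omega),
          show z' (L + 2) = u from by
            rw [show (L : ℤ) + 2 = j by omega]; exact insKnot_self z j u]
        have n1 : z H - u ≠ 0 :=
          sub_ne_zero.mpr (ne_of_gt (lt_of_lt_of_le hu2 (hz.monotone (by omega))))
        field_simp
      · have c1 : BCoef z j u (p + 1) (k + R) = (z H - u) / (z H - z (L + 1 + 1)) :=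
          BCoef_ratio (lo := L + 1) (hi := H) (by omega) (by omega) (by omega)
            (le_of_lt (lt_of_le_of_lt (hz.monotone (by omega)) hu1))
            (le_of_lt (lt_of_lt_of_le hu2 (hz.monotone (by omega))))
        have c2 : BCoef z j u (p + 2) k = (z H - u) / (z H - z (L + 1)) :=
          BCoef_ratio (lo := L) (hi := H) (by omega) (by omega) (by omega)
            (le_of_lt (lt_of_le_of_lt (hz.monotone (by omega)) hu1))
            (le_of_lt (lt_of_lt_of_le hu2 (hz.monotone (by omega))))
        rw [show (L : ℤ) + 1 + 1 = L + 2 by ring] at c1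
        rw [c1, c2, show z' (H + 1) = z H from insKnot_gt z j u (by omega) (by omega),
          show z' (L + 2) = z (L + 2) from insKnot_lt z j u (by omega)]
        ring
      · have c1 : BCoef z j u (p + 1) (k + R) = 0 :=
          BCoef_zero hz.monotone (by omega) (by omega)
            (le_of_lt (lt_of_le_of_lt (hz.monotone (by omega)) hu1))
        have c2 : BCoef z j u (p + 2) k = 0 :=
          BCoef_zero hz.monotone (by omega) (by omega)
            (le_of_lt (lt_of_le_of_lt (hz.monotone (by omega)) hu1))
        rw [c1, c2]; ring
    have E2 : (t - z L) / (z (H - 1) - z L) * BCoef z j u (p + 1) (k - 1 + R) +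
        (z H - t) / (z H - z (L + 1)) * ACoef z j u (p + 1) (k + R) =
        ACoef z j u (p + 2) k * ((z' H - t) / (z' H - z' (L + 1))) +
        BCoef z j u (p + 2) k * ((t - z' (L + 1)) / (z' H - z' (L + 1))) := by
      rcases (by omega : j ≤ L ∨ j = L + 1 ∨ (L + 1 < j ∧ j ≤ H - 1) ∨ j = H ∨ H < j) with
        hj | hj | ⟨hj1, hj2⟩ | hj | hj
      · have c1 : BCoef z j u (p + 1) (k - 1 + R) = 1 := BCoef_one (by omega)
        have c2 : ACoef z j u (p + 1) (k + R) = 0 :=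
          ACoef_zero hz.monotone (by omega) (by omega)
            (le_of_lt (lt_of_lt_of_le hu2 (hz.monotone (by omega))))
        have c3 : ACoef z j u (p + 2) k = 0 :=
          ACoef_zero hz.monotone (by omega) (by omega)
            (le_of_lt (lt_of_lt_of_le hu2 (hz.monotone (by omega))))
        have c4 : BCoef z j u (p + 2) k = 1 := BCoef_one (by omega)
        rw [c1, c2, c3, c4, show z' (L + 1) = z L from insKnot_gt z j u (by omega) (by omega),
          show z' H = z (H - 1) from insKnot_gt z j u (by omega) (by omega)]
        ring
      · have c1 : BCoef z j u (p + 1) (k - 1 + R) = 1 := BCoef_one (by omega)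
        have c2 : ACoef z j u (p + 1) (k + R) = 0 :=
          ACoef_zero hz.monotone (by omega) (by omega)
            (le_of_lt (lt_of_lt_of_le hu2 (hz.monotone (by omega))))
        have c3 : ACoef z j u (p + 2) k = (u - z L) / (z (H - 1) - z L) :=
          ACoef_ratio (lo := L) (hi := H) (by omega) (by omega) (by omega)
            (le_of_lt (lt_of_le_of_lt (hz.monotone (by omega)) hu1))
            (le_of_lt (lt_of_lt_of_le hu2 (hz.monotone (by omega))))
        have c4 : BCoef z j u (p + 2) k = 1 := BCoef_one (by omega)
        rw [c1, c2, c3, c4,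
          show z' (L + 1) = u from by
            rw [show (L : ℤ) + 1 = j by omega]; exact insKnot_self z j u,
          show z' H = z (H - 1) from insKnot_gt z j u (by omega) (by omega)]
        have n1 : z (H - 1) - u ≠ 0 :=
          sub_ne_zero.mpr (ne_of_gt (lt_of_lt_of_le hu2 (hz.monotone (by omega))))
        field_simp
        ring
      · have c1 : BCoef z j u (p + 1) (k - 1 + R) =
            (z (H - 1) - u) / (z (H - 1) - z (L + 1)) :=
          BCoef_ratio (lo := L) (hi := H - 1) (by omega) (by omega) (by omega)
            (le_of_lt (lt_of_le_of_lt (hz.monotone (by omega)) hu1))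
            (le_of_lt (lt_of_lt_of_le hu2 (hz.monotone (by omega))))
        have c2 : ACoef z j u (p + 1) (k + R) = (u - z (L + 1)) / (z (H - 1) - z (L + 1)) :=
          ACoef_ratio (lo := L + 1) (hi := H) (by omega) (by omega) (by omega)
            (le_of_lt (lt_of_le_of_lt (hz.monotone (by omega)) hu1))
            (le_of_lt (lt_of_lt_of_le hu2 (hz.monotone (by omega))))
        have c3 : ACoef z j u (p + 2) k = (u - z L) / (z (H - 1) - z L) :=
          ACoef_ratio (lo := L) (hi := H) (by omega) (by omega) (by omega)
            (le_of_lt (lt_of_le_of_lt (hz.monotone (by omega)) hu1))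
            (le_of_lt (lt_of_lt_of_le hu2 (hz.monotone (by omega))))
        have c4 : BCoef z j u (p + 2) k = (z H - u) / (z H - z (L + 1)) :=
          BCoef_ratio (lo := L) (hi := H) (by omega) (by omega) (by omega)
            (le_of_lt (lt_of_le_of_lt (hz.monotone (by omega)) hu1))
            (le_of_lt (lt_of_lt_of_le hu2 (hz.monotone (by omega))))
        rw [c1, c2, c3, c4, show z' (L + 1) = z (L + 1) from insKnot_lt z j u (by omega),
          show z' H = z (H - 1) from insKnot_gt z j u (by omega) (by omega)]
        have n3 : z (H - 1) - z (L + 1) ≠ 0 := sub_ne_zero.mpr (ne_of_gt (hz (by omega)))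
        field_simp
        ring
      · have c1 : BCoef z j u (p + 1) (k - 1 + R) = 0 :=
          BCoef_zero hz.monotone (by omega) (by omega)
            (le_of_lt (lt_of_le_of_lt (hz.monotone (by omega)) hu1))
        have c2 : ACoef z j u (p + 1) (k + R) = 1 := ACoef_one (by omega)
        have c3 : ACoef z j u (p + 2) k = 1 := ACoef_one (by omega)
        have c4 : BCoef z j u (p + 2) k = (z H - u) / (z H - z (L + 1)) :=
          BCoef_ratio (lo := L) (hi := H) (by omega) (by omega) (by omega)
            (le_of_lt (lt_of_le_of_lt (hz.monotone (by omega)) hu1))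
            (le_of_lt (lt_of_lt_of_le hu2 (hz.monotone (by omega))))
        rw [c1, c2, c3, c4, show z' (L + 1) = z (L + 1) from insKnot_lt z j u (by omega),
          show z' H = u from by
            rw [show (H : ℤ) = j by omega]; exact insKnot_self z j u]
        have n1 : u - z (L + 1) ≠ 0 :=
          sub_ne_zero.mpr (ne_of_gt (lt_of_le_of_lt (hz.monotone (by omega)) hu1))
        field_simp
        ring
      · have c1 : BCoef z j u (p + 1) (k - 1 + R) = 0 :=
          BCoef_zero hz.monotone (by omega) (by omega)
            (le_of_lt (lt_of_le_of_lt (hz.monotone (by omega)) hu1))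
        have c2 : ACoef z j u (p + 1) (k + R) = 1 := ACoef_one (by omega)
        have c3 : ACoef z j u (p + 2) k = 1 := ACoef_one (by omega)
        have c4 : BCoef z j u (p + 2) k = 0 :=
          BCoef_zero hz.monotone (by omega) (by omega)
            (le_of_lt (lt_of_le_of_lt (hz.monotone (by omega)) hu1))
        rw [c1, c2, c3, c4, show z' (L + 1) = z (L + 1) from insKnot_lt z j u (by omega),
          show z' H = z H from insKnot_lt z j u (by omega)]
        ring
    linear_combination Bspline z' (p + 1) (k - 1 + R) t * E1 +
      Bspline z' (p + 1) (k + R) t * E2 + Bspline z' (p + 1) (k + R + 1) t * E3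

noncomputable def midSeq (y : ℤ → ℝ) (B : ℤ) (n : ℕ) : ℤ → ℝ :=
  fun i => if i ≤ B then y (2 * i - B) else if i ≤ B + 2 * (n : ℤ) then y i
    else y (2 * i - B - 2 * (n : ℤ))

lemma midSeq_strictMono (y : ℤ → ℝ) (hy : StrictMono y) (B : ℤ) (n : ℕ) :
    StrictMono (midSeq y B n) := by
  apply strictMono_int_of_lt_succ
  intro i
  simp only [midSeq]
  split_ifs <;> apply hy <;> omega

lemma midSeq_zero (y : ℤ → ℝ) (B : ℤ) (i : ℤ) : midSeq y B 0 i = y (2 * i - B) := by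
  simp only [midSeq]
  split_ifs <;> (try rfl) <;> congr 1 <;> omega

lemma midSeq_mid (y : ℤ → ℝ) (B : ℤ) (n : ℕ) {i : ℤ} (h1 : B ≤ i) (h2 : i ≤ B + 2 * (n : ℤ)) :
    midSeq y B n i = y i := by
  simp only [midSeq]
  split_ifs <;> (try rfl) <;> congr 1 <;> omega

lemma midSeq_right (y : ℤ → ℝ) (B : ℤ) (n : ℕ) {i m : ℤ} (h : B + 2 * (n : ℤ) ≤ i)
    (hm : m = 2 * i - B - 2 * (n : ℤ)) : midSeq y B n i = y m := by
  subst hm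
  simp only [midSeq]
  split_ifs <;> (try rfl) <;> congr 1 <;> omega

lemma midSeq_insert (y : ℤ → ℝ) (B : ℤ) (n : ℕ) :
    insKnot (midSeq y B n) (B + 2 * (n : ℤ) + 1) (y (B + 2 * (n : ℤ) + 1)) =
      midSeq y B (n + 1) := by
  funext i
  simp only [insKnot, midSeq]
  split_ifs <;> (try rfl) <;> (try (congr 1; omega)) <;> omega

lemma refine_exists (p : ℕ) (hp : 1 ≤ p) (y : ℤ → ℝ) (hy : StrictMono y) (k : ℤ) :
    ∃ c : ℤ → ℝ,
      (∀ ℓ : ℤ, (ℓ < 2 * k - ((p / 2 : ℕ) : ℤ) ∨ 2 * k + (((p + 1) / 2 : ℕ) : ℤ) < ℓ) →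
        c ℓ = 0) ∧
      ∀ t : ℝ, Bspline (fun m => y (2 * m)) p k t = ∑ᶠ ℓ : ℤ, c ℓ * Bspline y p ℓ t := by
  obtain ⟨B, hB⟩ : ∃ B : ℤ, B = 2 * k - 2 * ((p / 2 : ℕ) : ℤ) := ⟨_, rfl⟩
  obtain ⟨lo, hlo⟩ : ∃ lo : ℤ, lo = 2 * k - ((p / 2 : ℕ) : ℤ) := ⟨_, rfl⟩
  have main : ∀ n : ℕ,
      ∃ c : ℤ → ℝ, (∀ ℓ : ℤ, (ℓ < lo ∨ lo + (n : ℤ) < ℓ) → c ℓ = 0) ∧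
        ∀ t : ℝ, Bspline (fun m => y (2 * m)) p k t =
          ∑ᶠ ℓ : ℤ, c ℓ * Bspline (midSeq y B n) p ℓ t := by
    intro n
    induction n with
    | zero =>
      refine ⟨fun ℓ => if ℓ = lo then 1 else 0,
        fun ℓ h => by show (if ℓ = lo then (1:ℝ) else 0) = 0; rw [if_neg (by omega)], fun t => ?_⟩
      rw [finsum_eq_single _ lo (fun b hb => by
        show (if b = lo then (1:ℝ) else 0) * _ = 0
        rw [if_neg hb, zero_mul])]
      beta_reduce
      rw [if_pos rfl, one_mul]
      have hfun : (fun m : ℤ => y (2 * m)) = (fun m : ℤ => midSeq y B 0 (m + (k - ((p / 2 : ℕ) : ℤ)))) := by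
        funext m
        rw [midSeq_zero]
        congr 1
        omega
      rw [hfun, Bspline_shift p (midSeq y B 0) (k - ((p / 2 : ℕ) : ℤ)) k t,
        show k + (k - ((p / 2 : ℕ) : ℤ)) = lo by omega]
    | succ n ihn =>
      obtain ⟨c, hc0, hcr⟩ := ihn
      have hsupfin : ∀ (g : ℤ → ℝ), (Function.support fun ℓ => c ℓ * g ℓ).Finite := by
        intro g
        apply Set.Finite.subset (Set.finite_Icc lo (lo + (n : ℤ)))
        intro ℓ hℓ
        simp only [Function.mem_support] at hℓ
        rw [Set.mem_Icc]
        by_contra hcon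
        exact hℓ (by rw [hc0 ℓ (by omega)]; exact zero_mul _)
      have hsupfin' : ∀ (g : ℤ → ℝ), (Function.support fun ℓ => c (ℓ - 1) * g ℓ).Finite := by
        intro g
        apply Set.Finite.subset (Set.finite_Icc (lo + 1) (lo + (n : ℤ) + 1))
        intro ℓ hℓ
        simp only [Function.mem_support] at hℓ
        rw [Set.mem_Icc]
        by_contra hcon
        exact hℓ (by rw [hc0 (ℓ - 1) (by omega)]; exact zero_mul _)
      have hw : StrictMono (midSeq y B n) := midSeq_strictMono y hy B n
      have hu1 : midSeq y B n (B + 2 * (n : ℤ) + 1 - 1) < y (B + 2 * (n : ℤ) + 1) := by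
        rw [midSeq_mid y B n (by omega) (by omega)]
        exact hy (by omega)
      have hu2 : y (B + 2 * (n : ℤ) + 1) < midSeq y B n (B + 2 * (n : ℤ) + 1) := by
        rw [midSeq_right y B n (by omega) (show B + 2 * (n : ℤ) + 2 = _ by omega)]
        exact hy (by omega)
      obtain ⟨q, hq⟩ : ∃ q : ℕ, p = q + 1 := ⟨p - 1, by omega⟩
      have bo : ∀ (ℓ : ℤ) (t : ℝ), Bspline (midSeq y B n) p ℓ t =
          ACoef (midSeq y B n) (B + 2 * (n : ℤ) + 1) (y (B + 2 * (n : ℤ) + 1)) p ℓ *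
            Bspline (midSeq y B (n + 1)) p ℓ t +
          BCoef (midSeq y B n) (B + 2 * (n : ℤ) + 1) (y (B + 2 * (n : ℤ) + 1)) p ℓ *
            Bspline (midSeq y B (n + 1)) p (ℓ + 1) t := by
        intro ℓ t
        rw [← midSeq_insert y B n]
        subst hq
        exact boehm (midSeq y B n) hw _ _ hu1 hu2 q ℓ t
      refine ⟨fun ℓ =>
        c ℓ * ACoef (midSeq y B n) (B + 2 * (n : ℤ) + 1) (y (B + 2 * (n : ℤ) + 1)) p ℓ +
        c (ℓ - 1) * BCoef (midSeq y B n) (B + 2 * (n : ℤ) + 1) (y (B + 2 * (n : ℤ) + 1)) p (ℓ - 1),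
        fun ℓ h => by beta_reduce; rw [hc0 ℓ (by omega), hc0 (ℓ - 1) (by omega)]; ring,
        fun t => ?_⟩
      rw [hcr t]
      calc ∑ᶠ ℓ : ℤ, c ℓ * Bspline (midSeq y B n) p ℓ t
          = ∑ᶠ ℓ : ℤ, (c ℓ * (ACoef (midSeq y B n) (B + 2 * (n : ℤ) + 1) (y (B + 2 * (n : ℤ) + 1)) p ℓ *
              Bspline (midSeq y B (n + 1)) p ℓ t) +
            c ℓ * (BCoef (midSeq y B n) (B + 2 * (n : ℤ) + 1) (y (B + 2 * (n : ℤ) + 1)) p ℓ *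
              Bspline (midSeq y B (n + 1)) p (ℓ + 1) t)) := by
            exact finsum_congr fun ℓ => by rw [bo ℓ t]; ring
        _ = (∑ᶠ ℓ : ℤ, c ℓ * (ACoef (midSeq y B n) (B + 2 * (n : ℤ) + 1) (y (B + 2 * (n : ℤ) + 1)) p ℓ *
              Bspline (midSeq y B (n + 1)) p ℓ t)) +
            ∑ᶠ ℓ : ℤ, c ℓ * (BCoef (midSeq y B n) (B + 2 * (n : ℤ) + 1) (y (B + 2 * (n : ℤ) + 1)) p ℓ *
              Bspline (midSeq y B (n + 1)) p (ℓ + 1) t) :=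
            finsum_add_distrib (hsupfin _) (hsupfin _)
        _ = (∑ᶠ ℓ : ℤ, c ℓ * (ACoef (midSeq y B n) (B + 2 * (n : ℤ) + 1) (y (B + 2 * (n : ℤ) + 1)) p ℓ *
              Bspline (midSeq y B (n + 1)) p ℓ t)) +
            ∑ᶠ ℓ : ℤ, c (ℓ - 1) * (BCoef (midSeq y B n) (B + 2 * (n : ℤ) + 1) (y (B + 2 * (n : ℤ) + 1)) p (ℓ - 1) *
              Bspline (midSeq y B (n + 1)) p (ℓ - 1 + 1) t) := by
            congr 1
            exact (finsum_comp_equiv (Equiv.subRight (1 : ℤ))).symm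
        _ = ∑ᶠ ℓ : ℤ, ((c ℓ * ACoef (midSeq y B n) (B + 2 * (n : ℤ) + 1) (y (B + 2 * (n : ℤ) + 1)) p ℓ +
              c (ℓ - 1) * BCoef (midSeq y B n) (B + 2 * (n : ℤ) + 1) (y (B + 2 * (n : ℤ) + 1)) p (ℓ - 1)) *
              Bspline (midSeq y B (n + 1)) p ℓ t) := by
            rw [← finsum_add_distrib (hsupfin _) (hsupfin' _)]
            exact finsum_congr fun ℓ => by rw [show ℓ - 1 + 1 = ℓ by ring]; ring
  obtain ⟨c, hc0, hcr⟩ := main p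
  refine ⟨c, fun ℓ h => hc0 ℓ (by omega), fun t => ?_⟩
  rw [hcr t]
  refine finsum_congr fun ℓ => ?_
  by_cases hcl : c ℓ = 0
  · rw [hcl, zero_mul, zero_mul]
  · have hband : lo ≤ ℓ ∧ ℓ ≤ lo + (p : ℤ) := by
      by_contra hcon
      exact hcl (hc0 ℓ (by omega))
    rw [Bspline_congr p (midSeq y B p) y ℓ
      (fun i h1 h2 => midSeq_mid y B p (by omega) (by omega)) t]

/-- existence, uniqueness and band structure of the B-spline
refinement: with fine knots `y` and coarse knots `x k = y (2k)`, each coarse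
B-spline `φ_k^[p]` is a unique linear combination of the fine B-splines
`ψ_ℓ^[p]`, with coefficients vanishing unless `2k - ⌊p/2⌋ ≤ ℓ ≤ 2k + ⌈p/2⌉`
(hence at most `p+1` nonzero entries per column). -/
theorem bspline_refinement_exists_unique
    (p : ℕ) (hp : 1 ≤ p) (y : ℤ → ℝ) (hy : StrictMono y)
    (htop : Filter.Tendsto y Filter.atTop Filter.atTop)
    (hbot : Filter.Tendsto y Filter.atBot Filter.atBot)
    (k : ℤ) :
    ∃! H : ℤ → ℝ,
      (∀ ℓ : ℤ, (ℓ < 2 * k - ((p / 2 : ℕ) : ℤ) ∨ 2 * k + (((p + 1) / 2 : ℕ) : ℤ) < ℓ) →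
        H ℓ = 0) ∧
      ∀ t : ℝ, Bspline (fun m => y (2 * m)) p k t = ∑ᶠ ℓ : ℤ, H ℓ * Bspline y p ℓ t := by
  obtain ⟨c, hc0, hcr⟩ := refine_exists p hp y hy k
  obtain ⟨lo, hlo⟩ : ∃ lo : ℤ, lo = 2 * k - ((p / 2 : ℕ) : ℤ) := ⟨_, rfl⟩
  obtain ⟨hi, hhi⟩ : ∃ hi : ℤ, hi = 2 * k + (((p + 1) / 2 : ℕ) : ℤ) := ⟨_, rfl⟩
  refine ⟨c, ⟨hc0, hcr⟩, ?_⟩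
  rintro H' ⟨h0', hr'⟩
  have conv : ∀ (G : ℤ → ℝ),
      (∀ ℓ : ℤ, (ℓ < 2 * k - ((p / 2 : ℕ) : ℤ) ∨ 2 * k + (((p + 1) / 2 : ℕ) : ℤ) < ℓ) → G ℓ = 0) →
      ∀ t : ℝ, ∑ᶠ ℓ : ℤ, G ℓ * Bspline y p ℓ t =
        ∑ ℓ ∈ Finset.Icc lo hi, G ℓ * Bspline y p ℓ t := by
    intro G hG t
    apply finsum_eq_sum_of_support_subset
    intro ℓ hℓ
    simp only [Function.mem_support] at hℓ
    simp only [Finset.coe_Icc, Set.mem_Icc]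
    by_contra hcon
    exact hℓ (by rw [hG ℓ (by omega)]; exact zero_mul _)
  have sumeq : ∀ t : ℝ,
      ∑ ℓ ∈ Finset.Icc lo hi, (H' ℓ - c ℓ) * Bspline y p ℓ t = 0 := by
    intro t
    have key : ∑ᶠ ℓ : ℤ, H' ℓ * Bspline y p ℓ t = ∑ᶠ ℓ : ℤ, c ℓ * Bspline y p ℓ t :=
      (hr' t).symm.trans (hcr t)
    rw [conv H' h0' t, conv c hc0 t] at key
    calc ∑ ℓ ∈ Finset.Icc lo hi, (H' ℓ - c ℓ) * Bspline y p ℓ t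
        = (∑ ℓ ∈ Finset.Icc lo hi, H' ℓ * Bspline y p ℓ t) -
          ∑ ℓ ∈ Finset.Icc lo hi, c ℓ * Bspline y p ℓ t := by
          rw [← Finset.sum_sub_distrib]
          exact Finset.sum_congr rfl fun ℓ _ => by ring
      _ = 0 := by rw [key, sub_self]
  have dzero : ∀ N : ℕ, ∀ ℓ : ℤ, ℓ ≤ lo - 1 + (N : ℤ) → H' ℓ - c ℓ = 0 := by
    intro N
    induction N with
    | zero =>
      intro ℓ hℓ
      rw [h0' ℓ (by omega), hc0 ℓ (by omega), sub_self]
    | succ N ih =>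
      intro ℓ hℓ
      rcases (by omega : ℓ ≤ lo - 1 + (N : ℤ) ∨ ℓ = lo + (N : ℤ)) with h | h
      · exact ih ℓ h
      by_cases hband : 2 * k + (((p + 1) / 2 : ℕ) : ℤ) < ℓ
      · rw [h0' ℓ (Or.inr hband), hc0 ℓ (Or.inr hband), sub_self]
      · obtain ⟨a, ha⟩ : ∃ a : ℤ, a = ℓ - ((p / 2 : ℕ) : ℤ) := ⟨_, rfl⟩
        obtain ⟨t0, ht1, ht2⟩ : ∃ t0 : ℝ, y a < t0 ∧ t0 < y (a + 1) :=
          ⟨(y a + y (a + 1)) / 2, by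
            constructor <;> · have := hy (show a < a + 1 by omega); linarith⟩
        have S := sumeq t0
        rw [Finset.sum_eq_single_of_mem ℓ (Finset.mem_Icc.mpr ⟨by omega, by omega⟩)
          (fun b hb hne => ?_)] at S
        · rcases mul_eq_zero.mp S with hS | hS
          · exact hS
          · exfalso
            have hpos : 0 < Bspline y p ℓ t0 := by
              apply Bspline_pos p hp y hy ℓ t0
              · rw [show ℓ - ((p / 2 : ℕ) : ℤ) = a from ha.symm]; exact ht1
              · rw [show ℓ - ((p / 2 : ℕ) : ℤ) + 1 = a + 1 by omega]; exact ht2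
            exact (ne_of_gt hpos) hS
        · rcases (by omega : b ≤ lo - 1 + (N : ℤ) ∨ ℓ < b) with hcase | hcase
          · rw [ih b hcase, zero_mul]
          · rw [Bspline_zero_left p y hy.monotone b t0
              (lt_of_lt_of_le ht2 (hy.monotone (by omega))), mul_zero]
  funext ℓ
  exact sub_eq_zero.mp (dzero (ℓ - lo + 1).toNat ℓ (by omega))
end
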